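/- arXiv:0901.4617 — 8 statements merged into one kernel-verified Lean document; each statement's English description precedes it below -/
import Mathlib

section
/- Let (E,ℰ,π) be a probability space, Q a transition kernel with invariant measure π, and ξ : E → ℝ^d measurable. For 1 ≤ p' < p < ∞ define, for t ∈ ℝ^d, the operator Q(t)f(x) = ∫_E e^{i⟨t,ξ(y)⟩} f(y) Q(x,dy). Then for each fixed t ∈ ℝ^d, the operator norm of Q(t+h) − Q(t) from L^p(π) to L^{p'}(π) tends to 0 as h → 0. -/
open MeasureTheory ProbabilityTheory Filter
open scoped InnerProductSpace ENNReal

/-- For `1 ≤ p' < p < ∞`, the Fourier kernels `Q(t)f(x) = ∫ e^{i⟨t,ξ(y)⟩} f(y) Q(x,dy)`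
satisfy `‖Q(t+h) − Q(t)‖_{L^p(π) → L^{p'}(π)} → 0` as `h → 0`, for each fixed `t`. -/
theorem stmt2 {E : Type*} [MeasurableSpace E] {d : ℕ}
    (Q : Kernel E E) [IsMarkovKernel Q]
    (π : Measure E) [IsProbabilityMeasure π]
    (hinv : π.bind (fun x => Q x) = π)
    (ξ : E → EuclideanSpace ℝ (Fin d)) (hξ : Measurable ξ)
    (p p' : ℝ≥0∞) (hp'1 : 1 ≤ p') (hp'p : p' < p) (hp : p < ∞)
    (t : EuclideanSpace ℝ (Fin d)) :
    Tendsto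
      (fun h : EuclideanSpace ℝ (Fin d) =>
        ⨆ (f : E → ℂ) (_ : Measurable f) (_ : eLpNorm f p π ≤ 1),
          eLpNorm
            (fun x =>
              (∫ y, Complex.exp (Complex.I * (⟪t + h, ξ y⟫_ℝ : ℂ)) * f y ∂(Q x)) -
              (∫ y, Complex.exp (Complex.I * (⟪t, ξ y⟫_ℝ : ℂ)) * f y ∂(Q x)))
            p' π)
      (nhds 0) (nhds 0) := by
  -- basic exponent facts
  have hp'0 : p' ≠ 0 := (lt_of_lt_of_le zero_lt_one hp'1).ne'
  have hp'top : p' ≠ ∞ := (hp'p.trans hp).ne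
  set q : ℝ := p'.toReal with hqdef
  have hq0 : 0 < q := ENNReal.toReal_pos hp'0 hp'top
  -- the auxiliary exponent r with 1/p' = 1/r + 1/p
  set r : ℝ≥0∞ := (1 / p' - 1 / p)⁻¹ with hr
  have hinv_lt : 1 / p < 1 / p' := by
    rw [one_div, one_div]; exact ENNReal.inv_lt_inv.mpr hp'p
  have hc_lt_top : 1 / p' - 1 / p < ∞ := by
    refine lt_of_le_of_lt tsub_le_self ?_
    rw [one_div]
    exact ENNReal.inv_lt_top.mpr (lt_of_lt_of_le zero_lt_one hp'1)
  have hc_pos : 0 < 1 / p' - 1 / p := tsub_pos_of_lt hinv_lt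
  have hrne0 : r ≠ 0 := by rw [hr]; exact ENNReal.inv_ne_zero.mpr hc_lt_top.ne
  have hrnetop : r ≠ ∞ := by rw [hr]; exact ENNReal.inv_ne_top.mpr hc_pos.ne'
  have hpqr : 1 / p' = 1 / r + 1 / p := by
    rw [hr, one_div (1 / p' - 1 / p)⁻¹, inv_inv, tsub_add_cancel_of_le hinv_lt.le]
  set s : ℝ := r.toReal with hsdef
  have hs0 : 0 < s := ENNReal.toReal_pos hrne0 hrnetop
  -- exponential factors
  have hnorme : ∀ z : ℝ, ‖Complex.exp (Complex.I * (z : ℂ))‖ = 1 := by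
    intro z
    rw [Complex.norm_exp]
    simp [Complex.mul_re]
  have hmeas_e : ∀ v : EuclideanSpace ℝ (Fin d),
      Measurable fun y => Complex.exp (Complex.I * ((⟪v, ξ y⟫_ℝ : ℝ) : ℂ)) := by
    intro v
    have h1 : Measurable fun y => ⟪v, ξ y⟫_ℝ :=
      (continuous_const.inner continuous_id).measurable.comp hξ
    exact Complex.measurable_exp.comp (measurable_const.mul (Complex.measurable_ofReal.comp h1))
  set g : EuclideanSpace ℝ (Fin d) → E → ℂ :=
    fun h y => Complex.exp (Complex.I * ((⟪h, ξ y⟫_ℝ : ℝ) : ℂ)) - 1 with hgdef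
  have hg_meas : ∀ h, Measurable (g h) := fun h => (hmeas_e h).sub measurable_const
  have hg_bdd : ∀ h y, ‖g h y‖ ≤ 2 := by
    intro h y
    calc ‖g h y‖ ≤ ‖Complex.exp (Complex.I * ((⟪h, ξ y⟫_ℝ : ℝ) : ℂ))‖ + ‖(1 : ℂ)‖ :=
          norm_sub_le _ _
      _ = 2 := by rw [hnorme]; norm_num
  set B : EuclideanSpace ℝ (Fin d) → ℝ≥0∞ := fun h => eLpNorm (g h) r π with hBdef
  -- Step 1 : B tends to 0
  have hBtendsto : Tendsto B (nhds 0) (nhds 0) := by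
    have hBform : ∀ h, B h = (∫⁻ y, (‖g h y‖₊ : ℝ≥0∞) ^ s ∂π) ^ (1 / s) := fun h =>
      eLpNorm_eq_lintegral_rpow_enorm_toReal hrne0 hrnetop
    have hlim : Tendsto (fun h => ∫⁻ y, (‖g h y‖₊ : ℝ≥0∞) ^ s ∂π) (nhds 0) (nhds 0) := by
      rw [tendsto_iff_seq_tendsto]
      intro u hu
      have key : Tendsto (fun n => ∫⁻ y, (‖g (u n) y‖₊ : ℝ≥0∞) ^ s ∂π) atTop
          (nhds (∫⁻ _, (0 : ℝ≥0∞) ∂π)) := by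
        refine tendsto_lintegral_of_dominated_convergence (fun _ => (2 : ℝ≥0∞) ^ s)
          (fun n => ((hg_meas (u n)).enorm).pow_const s)
          (fun n => Eventually.of_forall fun y => ?_) ?_
          (Eventually.of_forall fun y => ?_)
        · refine ENNReal.rpow_le_rpow ?_ hs0.le
          have h2 : ‖g (u n) y‖₊ ≤ (2 : NNReal) := by exact_mod_cast hg_bdd (u n) y
          exact_mod_cast ENNReal.coe_le_coe.mpr h2
        · rw [lintegral_const, measure_univ, mul_one]
          exact ENNReal.rpow_ne_top_of_nonneg hs0.le ENNReal.ofNat_ne_top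
        · have hcont : Continuous fun v : EuclideanSpace ℝ (Fin d) =>
              (‖g v y‖₊ : ℝ≥0∞) ^ s := by
            have h1 : Continuous fun v : EuclideanSpace ℝ (Fin d) =>
                Complex.exp (Complex.I * ((⟪v, ξ y⟫_ℝ : ℝ) : ℂ)) := by
              have : Continuous fun v : EuclideanSpace ℝ (Fin d) => ⟪v, ξ y⟫_ℝ :=
                continuous_id.inner continuous_const
              exact Complex.continuous_exp.comp
                (continuous_const.mul (Complex.continuous_ofReal.comp this))
            exact ENNReal.continuous_rpow_const.comp
              (ENNReal.continuous_coe.comp (h1.sub continuous_const).nnnorm)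
          have hg0 : g (0 : EuclideanSpace ℝ (Fin d)) y = 0 := by
            rw [hgdef]
            simp only [inner_zero_left, Complex.ofReal_zero, mul_zero, Complex.exp_zero,
              sub_self]
          have hG0 : (‖g (0 : EuclideanSpace ℝ (Fin d)) y‖₊ : ℝ≥0∞) ^ s = 0 := by
            rw [hg0]; simp [ENNReal.zero_rpow_of_pos hs0]
          have h2 := (hcont.tendsto 0).comp hu
          rw [Function.comp_def] at h2
          show Tendsto (fun n => (‖g (u n) y‖₊ : ℝ≥0∞) ^ s) atTop (nhds 0)
          rwa [hG0] at h2
      simpa [Function.comp_def] using key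
    have hcont : Tendsto (fun x : ℝ≥0∞ => x ^ (1 / s)) (nhds 0) (nhds 0) := by
      have := ENNReal.continuous_rpow_const (y := 1 / s) |>.tendsto 0
      rwa [ENNReal.zero_rpow_of_pos (by positivity)] at this
    exact (hcont.comp hlim).congr fun h => (hBform h).symm
  -- Step 2 : the supremum is bounded by B h
  have hbound : ∀ h : EuclideanSpace ℝ (Fin d),
      (⨆ (f : E → ℂ) (_ : Measurable f) (_ : eLpNorm f p π ≤ 1),
          eLpNorm
            (fun x =>
              (∫ y, Complex.exp (Complex.I * (⟪t + h, ξ y⟫_ℝ : ℂ)) * f y ∂(Q x)) -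
              (∫ y, Complex.exp (Complex.I * (⟪t, ξ y⟫_ℝ : ℂ)) * f y ∂(Q x)))
            p' π) ≤ B h := by
    intro h
    refine iSup_le fun f => iSup_le fun hf => iSup_le fun hfp => ?_
    have hφmeas : Measurable fun y => g h y * f y := (hg_meas h).mul hf
    -- integrability transfer
    have hint_iff : ∀ (v : EuclideanSpace ℝ (Fin d)) (x : E),
        Integrable (fun y => Complex.exp (Complex.I * ((⟪v, ξ y⟫_ℝ : ℝ) : ℂ)) * f y) (Q x) ↔
          Integrable f (Q x) := by
      intro v x
      rw [← integrable_norm_iff (f := fun y => Complex.exp (Complex.I * ((⟪v, ξ y⟫_ℝ : ℝ) : ℂ)) * f y)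
          (((hmeas_e v).mul hf).aestronglyMeasurable),
        ← integrable_norm_iff hf.aestronglyMeasurable]
      simp only [norm_mul, hnorme, one_mul]
    -- splitting of the exponential
    have hsplit : ∀ y, Complex.exp (Complex.I * ((⟪t + h, ξ y⟫_ℝ : ℝ) : ℂ)) =
        Complex.exp (Complex.I * ((⟪t, ξ y⟫_ℝ : ℝ) : ℂ)) *
          Complex.exp (Complex.I * ((⟪h, ξ y⟫_ℝ : ℝ) : ℂ)) := by
      intro y
      rw [← Complex.exp_add, ← mul_add, inner_add_left, Complex.ofReal_add]
    have hnormφ : ∀ y,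
        ‖(Complex.exp (Complex.I * ((⟪t + h, ξ y⟫_ℝ : ℝ) : ℂ)) -
            Complex.exp (Complex.I * ((⟪t, ξ y⟫_ℝ : ℝ) : ℂ))) * f y‖ = ‖g h y * f y‖ := by
      intro y
      rw [hsplit y, hgdef]
      have : Complex.exp (Complex.I * ((⟪t, ξ y⟫_ℝ : ℝ) : ℂ)) *
          Complex.exp (Complex.I * ((⟪h, ξ y⟫_ℝ : ℝ) : ℂ)) -
          Complex.exp (Complex.I * ((⟪t, ξ y⟫_ℝ : ℝ) : ℂ)) =
          Complex.exp (Complex.I * ((⟪t, ξ y⟫_ℝ : ℝ) : ℂ)) *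
            (Complex.exp (Complex.I * ((⟪h, ξ y⟫_ℝ : ℝ) : ℂ)) - 1) := by ring
      rw [this, mul_assoc, norm_mul, hnorme, one_mul]
    -- pointwise bound on the kernel integral, with Jensen
    have key : ∀ x : E,
        (‖(∫ y, Complex.exp (Complex.I * (⟪t + h, ξ y⟫_ℝ : ℂ)) * f y ∂(Q x)) -
            (∫ y, Complex.exp (Complex.I * (⟪t, ξ y⟫_ℝ : ℂ)) * f y ∂(Q x))‖₊ : ℝ≥0∞) ^ q ≤
          ∫⁻ y, (‖g h y * f y‖₊ : ℝ≥0∞) ^ q ∂(Q x) := by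
      intro x
      by_cases hint : Integrable f (Q x)
      · have h1 : Integrable
            (fun y => Complex.exp (Complex.I * ((⟪t + h, ξ y⟫_ℝ : ℝ) : ℂ)) * f y) (Q x) :=
          (hint_iff (t + h) x).2 hint
        have h2 : Integrable
            (fun y => Complex.exp (Complex.I * ((⟪t, ξ y⟫_ℝ : ℝ) : ℂ)) * f y) (Q x) :=
          (hint_iff t x).2 hint
        have hFx : (∫ y, Complex.exp (Complex.I * (⟪t + h, ξ y⟫_ℝ : ℂ)) * f y ∂(Q x)) -
            (∫ y, Complex.exp (Complex.I * (⟪t, ξ y⟫_ℝ : ℂ)) * f y ∂(Q x)) =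
            ∫ y, (Complex.exp (Complex.I * ((⟪t + h, ξ y⟫_ℝ : ℝ) : ℂ)) -
              Complex.exp (Complex.I * ((⟪t, ξ y⟫_ℝ : ℝ) : ℂ))) * f y ∂(Q x) := by
          rw [← integral_sub h1 h2]
          congr 1; funext y; ring
        have step1 : (‖(∫ y, Complex.exp (Complex.I * (⟪t + h, ξ y⟫_ℝ : ℂ)) * f y ∂(Q x)) -
            (∫ y, Complex.exp (Complex.I * (⟪t, ξ y⟫_ℝ : ℂ)) * f y ∂(Q x))‖₊ : ℝ≥0∞) ≤
            ∫⁻ y, (‖g h y * f y‖₊ : ℝ≥0∞) ∂(Q x) := by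
          rw [hFx]
          refine le_trans (enorm_integral_le_lintegral_enorm _) (le_of_eq ?_)
          refine lintegral_congr fun y => ?_
          rw [← ofReal_norm, hnormφ y, ofReal_norm]; rfl
        have jensen : (∫⁻ y, (‖g h y * f y‖₊ : ℝ≥0∞) ∂(Q x)) ≤
            (∫⁻ y, (‖g h y * f y‖₊ : ℝ≥0∞) ^ q ∂(Q x)) ^ (1 / q) := by
          have := eLpNorm_le_eLpNorm_of_exponent_le (μ := Q x) (f := fun y => g h y * f y)
            hp'1 hφmeas.aestronglyMeasurable
          rwa [eLpNorm_one_eq_lintegral_enorm,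
            eLpNorm_eq_lintegral_rpow_enorm_toReal hp'0 hp'top] at this
        have := ENNReal.rpow_le_rpow (step1.trans jensen) hq0.le
        rwa [← ENNReal.rpow_mul, one_div_mul_cancel hq0.ne', ENNReal.rpow_one] at this
      · have h1 : ¬ Integrable
            (fun y => Complex.exp (Complex.I * ((⟪t + h, ξ y⟫_ℝ : ℝ) : ℂ)) * f y) (Q x) :=
          fun c => hint ((hint_iff (t + h) x).1 c)
        have h2 : ¬ Integrable
            (fun y => Complex.exp (Complex.I * ((⟪t, ξ y⟫_ℝ : ℝ) : ℂ)) * f y) (Q x) :=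
          fun c => hint ((hint_iff t x).1 c)
        rw [integral_undef h1, integral_undef h2, sub_self]
        simp [ENNReal.zero_rpow_of_pos hq0]
    -- assemble
    calc
      eLpNorm
          (fun x =>
            (∫ y, Complex.exp (Complex.I * (⟪t + h, ξ y⟫_ℝ : ℂ)) * f y ∂(Q x)) -
            (∫ y, Complex.exp (Complex.I * (⟪t, ξ y⟫_ℝ : ℂ)) * f y ∂(Q x)))
          p' π
          = (∫⁻ x, (‖(∫ y, Complex.exp (Complex.I * (⟪t + h, ξ y⟫_ℝ : ℂ)) * f y ∂(Q x)) -
              (∫ y, Complex.exp (Complex.I * (⟪t, ξ y⟫_ℝ : ℂ)) * f y ∂(Q x))‖₊ : ℝ≥0∞) ^ q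
              ∂π) ^ (1 / q) :=
        eLpNorm_eq_lintegral_rpow_enorm_toReal hp'0 hp'top
      _ ≤ (∫⁻ x, ∫⁻ y, (‖g h y * f y‖₊ : ℝ≥0∞) ^ q ∂(Q x) ∂π) ^ (1 / q) :=
        ENNReal.rpow_le_rpow (lintegral_mono key) (by positivity)
      _ = (∫⁻ y, (‖g h y * f y‖₊ : ℝ≥0∞) ^ q ∂π) ^ (1 / q) := by
        conv_rhs => rw [← hinv]
        rw [Measure.lintegral_bind (μ := fun x => Q x) (f := fun y => (‖g h y * f y‖₊ : ℝ≥0∞) ^ q)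
          Q.measurable.aemeasurable (hφmeas.enorm.pow_const q).aemeasurable]
      _ = eLpNorm (fun y => g h y * f y) p' π :=
        (eLpNorm_eq_lintegral_rpow_enorm_toReal (μ := π) (f := fun y => g h y * f y) hp'0 hp'top).symm
      _ ≤ eLpNorm (g h) r π * eLpNorm f p π := by
        have := eLpNorm_smul_le_mul_eLpNorm (μ := π)
            (hpqr := ⟨by simpa only [one_div] using hpqr.symm⟩)
          hf.aestronglyMeasurable (hg_meas h).aestronglyMeasurable
        exact this
      _ ≤ B h * 1 := mul_le_mul_right hfp _
      _ = B h := mul_one _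
  exact tendsto_of_tendsto_of_tendsto_of_le_of_le tendsto_const_nhds hBtendsto
    (fun h => zero_le) hbound
end

section
/- Let Q be a Markov kernel on (E,ℰ) with invariant probability π, and suppose there exist ℓ ≥ 1, η > 0, ρ < 1 such that π(A) ≤ η implies Q^ℓ(x,A) ≤ ρ^ℓ for all x ∈ E (Doeblin condition). Suppose Q^ℓ(x,dy) = α(x,y) dπ(y) + S(x,dy) where α is nonnegative, bounded, measurable and S is a positive kernel with S(x,A) = Q^ℓ(x, A ∩ (C_x ∪ L_x)) where π(C_x ∪ L_x) ≤ η for every x. Then for 1 < p < ∞ and q the conjugate exponent, the operator S acting on L^p(π) by Sf(x) = ∫ f(y) S(x,dy) satisfies ‖S‖_{L^p(π)→L^p(π)} ≤ ρ^{ℓ/q}. -/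
open MeasureTheory ProbabilityTheory
open scoped ENNReal

/-- Under the Doeblin condition, the kernel `S(x,A) = Q^ℓ(x, A ∩ (C_x ∪ L_x))`
(coming from the decomposition `Q^ℓ(x,dy) = α(x,y) dπ(y) + S(x,dy)` with
`π(C_x ∪ L_x) ≤ η`) acts on `L^p(π)` with operator norm at most `ρ^{ℓ/q}`,
`q` being the conjugate exponent of `p`.  Here this is stated as the bound
`‖Sf‖_p ≤ ρ^{ℓ/q} ‖f‖_p` for every measurable `f`. -/
theorem stmt3 {E : Type*} [MeasurableSpace E]
    (Qℓ : Kernel E E) [IsMarkovKernel Qℓ]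
    (π : Measure E) [IsProbabilityMeasure π]
    (hinv : π.bind (fun x => Qℓ x) = π)
    (ℓ : ℕ) (hℓ : 1 ≤ ℓ) (η ρ : ℝ) (hη : 0 < η) (hρ0 : 0 ≤ ρ) (hρ1 : ρ < 1)
    -- Doeblin condition
    (hDoeblin : ∀ A : Set E, MeasurableSet A → π A ≤ ENNReal.ofReal η →
      ∀ x : E, Qℓ x A ≤ ENNReal.ofReal (ρ ^ ℓ))
    -- the sets `D x = C_x ∪ L_x`
    (D : E → Set E) (hD : MeasurableSet {p : E × E | p.2 ∈ D p.1})
    (hDsmall : ∀ x, π (D x) ≤ ENNReal.ofReal η)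
    -- the decomposition `Q^ℓ(x,dy) = α(x,y) dπ(y) + S(x,dy)`
    (α : E → E → ℝ) (hαmeas : Measurable (Function.uncurry α))
    (hαpos : ∀ x y, 0 ≤ α x y) (hαbdd : ∃ M : ℝ, ∀ x y, α x y ≤ M)
    (hdec : ∀ x : E, ∀ A : Set E, MeasurableSet A →
      (Qℓ x A).toReal = (∫ y in A, α x y ∂π) + (Qℓ x (A ∩ D x)).toReal)
    (p q : ℝ) (hp : 1 < p) (hpq : 1 / p + 1 / q = 1)
    (f : E → ℂ) (hf : Measurable f) :
    eLpNorm (fun x => ∫ y in D x, f y ∂(Qℓ x)) (ENNReal.ofReal p) π ≤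
      ENNReal.ofReal (ρ ^ ((ℓ : ℝ) / q)) * eLpNorm f (ENNReal.ofReal p) π := by
  have hp0 : (0 : ℝ) < p := lt_trans one_pos hp
  have hpq' : Real.HolderConjugate p q := Real.holderConjugate_iff.mpr ⟨hp, by simpa [one_div] using hpq⟩
  have hq0 : (0 : ℝ) < q := hpq'.symm.pos
  set C : ℝ≥0∞ := ENNReal.ofReal (ρ ^ ((ℓ : ℝ) / q)) with hC
  set I : ℝ≥0∞ := ∫⁻ y, (‖f y‖₊ : ℝ≥0∞) ^ p ∂π with hI
  have hP0 : (ENNReal.ofReal p) ≠ 0 := by simp [ENNReal.ofReal_eq_zero, not_le, hp0]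
  have hPtop : (ENNReal.ofReal p) ≠ ∞ := ENNReal.ofReal_ne_top
  have hPto : (ENNReal.ofReal p).toReal = p := ENNReal.toReal_ofReal hp0.le
  have hfm : Measurable fun y => ((‖f y‖₊ : ℝ≥0∞) ^ p) := hf.enorm.pow_const _
  -- pointwise bound
  have key : ∀ x : E, (‖∫ y in D x, f y ∂(Qℓ x)‖₊ : ℝ≥0∞) ^ p ≤
      C ^ p * ∫⁻ y, (‖f y‖₊ : ℝ≥0∞) ^ p ∂(Qℓ x) := by
    intro x
    have hDx : MeasurableSet (D x) := hD.preimage (measurable_prodMk_left (x := x))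
    have h1 : (‖∫ y in D x, f y ∂(Qℓ x)‖₊ : ℝ≥0∞) ≤
        ∫⁻ y in D x, (‖f y‖₊ : ℝ≥0∞) ∂(Qℓ x) :=
      enorm_integral_le_lintegral_enorm _
    have h2 : (∫⁻ y in D x, (‖f y‖₊ : ℝ≥0∞) ∂(Qℓ x)) =
        ∫⁻ y, (‖f y‖₊ : ℝ≥0∞) * (D x).indicator 1 y ∂(Qℓ x) := by
      rw [← lintegral_indicator hDx]
      refine lintegral_congr fun y => ?_
      by_cases hy : y ∈ D x <;> simp [hy]
    have h3 := ENNReal.lintegral_mul_le_Lp_mul_Lq (Qℓ x) hpq' (f := fun y => (‖f y‖₊ : ℝ≥0∞))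
      hf.enorm.aemeasurable
      ((measurable_one.indicator hDx).aemeasurable)
    have h4 : (∫⁻ y, ((D x).indicator (1 : E → ℝ≥0∞) y) ^ q ∂(Qℓ x)) = Qℓ x (D x) := by
      rw [← lintegral_indicator_one hDx]
      refine lintegral_congr fun y => ?_
      by_cases hy : y ∈ D x <;>
        simp [hy, ENNReal.zero_rpow_of_pos hq0]
    have h5 : Qℓ x (D x) ≤ ENNReal.ofReal (ρ ^ ℓ) := hDoeblin (D x) hDx (hDsmall x) x
    have h6 : (Qℓ x (D x)) ^ (1 / q) ≤ C := by
      calc (Qℓ x (D x)) ^ (1 / q) ≤ (ENNReal.ofReal (ρ ^ ℓ)) ^ (1 / q) :=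
            ENNReal.rpow_le_rpow h5 (by positivity)
        _ = C := by
            rw [ENNReal.ofReal_rpow_of_nonneg (by positivity) (by positivity), hC]
            congr 1
            rw [← Real.rpow_natCast ρ ℓ, ← Real.rpow_mul hρ0]
            ring_nf
    have hg : (‖∫ y in D x, f y ∂(Qℓ x)‖₊ : ℝ≥0∞) ≤
        (∫⁻ y, (‖f y‖₊ : ℝ≥0∞) ^ p ∂(Qℓ x)) ^ (1 / p) * C := by
      refine h1.trans ?_
      rw [h2]
      refine (h3.trans ?_)
      gcongr
      rw [h4] at *
      exact h6
    calc (‖∫ y in D x, f y ∂(Qℓ x)‖₊ : ℝ≥0∞) ^ p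
        ≤ ((∫⁻ y, (‖f y‖₊ : ℝ≥0∞) ^ p ∂(Qℓ x)) ^ (1 / p) * C) ^ p :=
          ENNReal.rpow_le_rpow hg hp0.le
      _ = C ^ p * ∫⁻ y, (‖f y‖₊ : ℝ≥0∞) ^ p ∂(Qℓ x) := by
          rw [ENNReal.mul_rpow_of_nonneg _ _ hp0.le, ← ENNReal.rpow_mul,
            one_div_mul_cancel hp0.ne', ENNReal.rpow_one, mul_comm]
  -- integrate the pointwise bound
  have hbind : (∫⁻ x, ∫⁻ y, (‖f y‖₊ : ℝ≥0∞) ^ p ∂(Qℓ x) ∂π) = I := by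
    rw [hI]
    conv_rhs => rw [← hinv]
    exact (Measure.lintegral_bind (Qℓ.measurable.aemeasurable) hfm.aemeasurable).symm
  have hmain : (∫⁻ x, (‖∫ y in D x, f y ∂(Qℓ x)‖₊ : ℝ≥0∞) ^ p ∂π) ≤ C ^ p * I := by
    calc (∫⁻ x, (‖∫ y in D x, f y ∂(Qℓ x)‖₊ : ℝ≥0∞) ^ p ∂π)
        ≤ ∫⁻ x, C ^ p * ∫⁻ y, (‖f y‖₊ : ℝ≥0∞) ^ p ∂(Qℓ x) ∂π := lintegral_mono key
      _ = C ^ p * ∫⁻ x, ∫⁻ y, (‖f y‖₊ : ℝ≥0∞) ^ p ∂(Qℓ x) ∂π := lintegral_const_mul _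
          (Measurable.lintegral_kernel_prod_right (hfm.comp measurable_snd))
      _ = C ^ p * I := by rw [hbind]
  -- conclude
  rw [eLpNorm_eq_lintegral_rpow_enorm_toReal hP0 hPtop, eLpNorm_eq_lintegral_rpow_enorm_toReal hP0 hPtop,
    hPto]
  calc (∫⁻ x, (‖∫ y in D x, f y ∂(Qℓ x)‖₊ : ℝ≥0∞) ^ p ∂π) ^ (1 / p)
      ≤ (C ^ p * I) ^ (1 / p) := ENNReal.rpow_le_rpow hmain (by positivity)
    _ = C * I ^ (1 / p) := by
        rw [ENNReal.mul_rpow_of_nonneg _ _ (by positivity), ← ENNReal.rpow_mul,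
          mul_one_div_cancel hp0.ne', ENNReal.rpow_one]
end

section
/- Let a ∈ (−1,1), a ≠ 0, let p be a probability density on ℝ with finite second moment, and let Q be the transition operator Qf(x) = ∫_ℝ f(ax+y) p(y) dy of the autoregressive chain Xₙ = aX_{n−1} + θₙ. Let v(x) = 1 + x², ξ(x) = x, and Q(t)f(x) = ∫_ℝ e^{it(ax+y)} f(ax+y) p(y) dy. Then the operator norm ‖Q(t) − Q‖ on the weighted supremum space B_v = {f : sup_x |f(x)|/(1+x²) < ∞} does not converge to 0 as t → 0. More precisely, for g(x) = x², sup_{x∈ℝ} (1+x²)^{-1} |Q(t)g(x) − Qg(x)| does not tend to 0 as t → 0, since at x = π/(at) its value is at least (a²π²/(π² + a²t²)) |p̂(t) + 1| minus a term tending to 0, which converges to 2a² ≠ 0. -/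
open MeasureTheory Filter

lemma exp_I_sub_one_norm (r : ℝ) : ‖Complex.exp (Complex.I * r) - 1‖ ≤ |r| := by
  have h : Complex.exp (Complex.I * r) - 1
      = Complex.ofReal (Real.cos r - 1) + Complex.ofReal (Real.sin r) * Complex.I := by
    rw [mul_comm, Complex.exp_mul_I]
    push_cast [Complex.ofReal_cos, Complex.ofReal_sin]
    ring
  rw [h,
    Complex.norm_add_mul_I, ← Real.sqrt_sq_eq_abs]
  apply Real.sqrt_le_sqrt
  nlinarith [Real.one_sub_sq_div_two_le_cos (x := r), Real.sin_sq_add_cos_sq r]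

lemma core (p : ℝ → ℝ) (hpmeas : Measurable p) (hppos : ∀ y, 0 < p y)
    (hpint : ∫ y, p y = 1) (hpvar : Integrable (fun y => y ^ 2 * p y))
    (t c : ℝ) (hc : t * c = Real.pi) :
    c^2 * (2 - |t| * ∫ y, |y| * p y) - (4 * |c| * (∫ y, |y| * p y) + 2 * ∫ y, y^2 * p y)
      ≤ ‖(∫ y : ℝ, Complex.exp (Complex.I * ((t * (c + y) : ℝ) : ℂ)) *
              (((c + y : ℝ) : ℂ)) ^ 2 * ((p y : ℝ) : ℂ)) -
          ((∫ y : ℝ, (c + y) ^ 2 * p y : ℝ) : ℂ)‖ := by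
  -- basic integrability
  have hp : Integrable p := by
    by_contra h
    rw [integral_undef h] at hpint
    norm_num at hpint
  have hyp : Integrable (fun y => |y| * p y) := by
    refine Integrable.mono' (((hp.add hpvar).div_const 2)) ?_ ?_
    · exact (measurable_id.abs.mul hpmeas).aestronglyMeasurable
    · refine Eventually.of_forall fun y => ?_
      have h1 : 0 < p y := hppos y
      rw [Real.norm_eq_abs, abs_mul, abs_abs, abs_of_pos h1]
      simp only [Pi.add_apply]
      nlinarith [sq_nonneg (|y| - 1), sq_abs y]
  have hyp' : Integrable (fun y => y * p y) := by
    refine Integrable.mono' hyp ?_ ?_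
    · exact (measurable_id.mul hpmeas).aestronglyMeasurable
    · exact Eventually.of_forall fun y => by
        rw [Real.norm_eq_abs, abs_mul, abs_of_pos (hppos y)]
  have hC1 : 0 ≤ ∫ y, |y| * p y :=
    integral_nonneg fun y => mul_nonneg (abs_nonneg _) (hppos y).le
  set C₁ := ∫ y, |y| * p y with hC₁def
  set C := ∫ y, y^2 * p y with hCdef
  -- the oscillating factor
  set e : ℝ → ℂ := fun y => Complex.exp (Complex.I * ((t * y : ℝ) : ℂ)) with hedef
  have hem : Measurable e := by fun_prop
  have hea : ∀ y, ‖e y‖ = 1 := fun y => by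
    show ‖Complex.exp (Complex.I * ((t * y : ℝ) : ℂ))‖ = 1
    rw [mul_comm]
    exact Complex.norm_exp_ofReal_mul_I _
  have heb : ∀ y, ‖e y - 1‖ ≤ |t| * |y| := fun y => by
    have h := exp_I_sub_one_norm (t * y)
    rw [abs_mul] at h
    exact h
  have hq : Integrable (fun y => (c + y)^2 * p y) := by
    refine ((hp.const_mul (c^2)).add ((hyp'.const_mul (2*c)).add hpvar)).congr
      (Eventually.of_forall fun y => ?_)
    simp only [Pi.add_apply]
    ring
  -- rewrite the first integrand using exp(iπ) = -1
  have hrw : (∫ y : ℝ, Complex.exp (Complex.I * ((t * (c + y) : ℝ) : ℂ)) *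
              (((c + y : ℝ) : ℂ)) ^ 2 * ((p y : ℝ) : ℂ))
      = ∫ y : ℝ, (-(e y)) * (((c + y : ℝ) : ℂ)) ^ 2 * ((p y : ℝ) : ℂ) := by
    refine integral_congr_ae (Eventually.of_forall fun y => ?_)
    have h1 : t * (c + y) = Real.pi + t * y := by rw [← hc]; ring
    have h2 : Complex.I * ((t * (c + y) : ℝ) : ℂ)
        = (Real.pi : ℂ) * Complex.I + Complex.I * ((t * y : ℝ) : ℂ) := by
      rw [h1]; push_cast; ring
    simp only [h2, Complex.exp_add, Complex.exp_pi_mul_I, hedef, neg_one_mul]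
  have hof : ((∫ y : ℝ, (c + y) ^ 2 * p y : ℝ) : ℂ)
      = ∫ y : ℝ, (((c + y) ^ 2 * p y : ℝ) : ℂ) := integral_ofReal.symm
  -- complex integrabilities
  have hf1 : Integrable (fun y => (-(e y)) * (((c + y : ℝ) : ℂ)) ^ 2 * ((p y : ℝ) : ℂ)) := by
    refine Integrable.mono' hq ?_ (Eventually.of_forall fun y => ?_)
    · apply Measurable.aestronglyMeasurable
      fun_prop
    · rw [norm_mul, norm_mul, norm_neg, hea, one_mul, norm_pow, Complex.norm_real,
        Complex.norm_real, Real.norm_eq_abs, Real.norm_eq_abs, abs_of_pos (hppos y), sq_abs]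
  have hf2 : Integrable (fun y => (e y - 1) * ((p y : ℝ) : ℂ)) := by
    refine Integrable.mono' (hyp.const_mul |t|) ?_ (Eventually.of_forall fun y => ?_)
    · apply Measurable.aestronglyMeasurable
      fun_prop
    · rw [norm_mul, Complex.norm_real, Real.norm_eq_abs, abs_of_pos (hppos y)]
      calc ‖e y - 1‖ * p y ≤ (|t| * |y|) * p y :=
            mul_le_mul_of_nonneg_right (heb y) (hppos y).le
        _ = |t| * (|y| * p y) := by ring
  have hf2' : Integrable (fun y => (e y + 1) * ((p y : ℝ) : ℂ)) := by
    refine Integrable.mono' (hp.const_mul 2) ?_ (Eventually.of_forall fun y => ?_)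
    · apply Measurable.aestronglyMeasurable
      fun_prop
    · rw [norm_mul, Complex.norm_real, Real.norm_eq_abs, abs_of_pos (hppos y)]
      have h1 : ‖e y + 1‖ ≤ 2 := by
        calc ‖e y + 1‖ ≤ ‖e y‖ + ‖(1:ℂ)‖ := norm_add_le _ _
          _ = 2 := by rw [hea]; norm_num
      exact mul_le_mul_of_nonneg_right h1 (hppos y).le
  have hgint : Integrable (fun y => 4 * |c| * (|y| * p y) + 2 * (y ^ 2 * p y)) :=
    (hyp.const_mul (4 * |c|)).add (hpvar.const_mul 2)
  have hf3 : Integrable (fun y => (e y + 1) * (((2 * c * y + y ^ 2 : ℝ)) : ℂ) * ((p y : ℝ) : ℂ)) := by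
    refine Integrable.mono' hgint ?_ (Eventually.of_forall fun y => ?_)
    · apply Measurable.aestronglyMeasurable
      fun_prop
    · rw [norm_mul, norm_mul, Complex.norm_real, Complex.norm_real, Real.norm_eq_abs,
        Real.norm_eq_abs, abs_of_pos (hppos y)]
      have h1 : ‖e y + 1‖ ≤ 2 := by
        calc ‖e y + 1‖ ≤ ‖e y‖ + ‖(1:ℂ)‖ := norm_add_le _ _
          _ = 2 := by rw [hea]; norm_num
      have h2 : |2 * c * y + y ^ 2| ≤ 2 * |c| * |y| + y ^ 2 := by
        calc |2 * c * y + y ^ 2| ≤ |2 * c * y| + |y ^ 2| := abs_add_le _ _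
          _ = 2 * |c| * |y| + y ^ 2 := by rw [abs_mul, abs_mul, abs_pow, sq_abs]; norm_num
      have h3 : ‖e y + 1‖ * |2 * c * y + y ^ 2| ≤ 2 * (2 * |c| * |y| + y ^ 2) := by
        apply mul_le_mul h1 h2 (abs_nonneg _) (by norm_num)
      calc ‖e y + 1‖ * |2 * c * y + y ^ 2| * p y ≤ 2 * (2 * |c| * |y| + y ^ 2) * p y :=
            mul_le_mul_of_nonneg_right h3 (hppos y).le
        _ = 4 * |c| * (|y| * p y) + 2 * (y ^ 2 * p y) := by ring
  have hqC : Integrable (fun y : ℝ => (((c + y) ^ 2 * p y : ℝ) : ℂ)) := hq.ofReal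
  have h2int : Integrable (fun y : ℝ => ((2 * p y : ℝ) : ℂ)) := (hp.const_mul 2).ofReal
  set A := ∫ y, (e y + 1) * ((p y : ℝ) : ℂ) with hAdef
  set B := ∫ y, (e y + 1) * (((2 * c * y + y ^ 2 : ℝ)) : ℂ) * ((p y : ℝ) : ℂ) with hBdef
  have hsplit : (∫ y : ℝ, (-(e y)) * (((c + y : ℝ) : ℂ)) ^ 2 * ((p y : ℝ) : ℂ))
        - (∫ y : ℝ, (((c + y) ^ 2 * p y : ℝ) : ℂ))
      = -(((c ^ 2 : ℝ) : ℂ) * A + B) := by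
    rw [← integral_sub hf1 hqC]
    rw [show -(((c ^ 2 : ℝ) : ℂ) * A + B) = ((-(c ^ 2) : ℝ) : ℂ) * A - B from by
      push_cast; ring]
    rw [hAdef, ← integral_const_mul (((-(c ^ 2) : ℝ) : ℂ)), hBdef,
      ← integral_sub (hf2'.const_mul (((-(c ^ 2) : ℝ) : ℂ))) hf3]
    refine integral_congr_ae (Eventually.of_forall fun y => ?_)
    push_cast
    ring
  have hAlb : 2 - |t| * C₁ ≤ ‖A‖ := by
    have h2p : (∫ y : ℝ, ((2 * p y : ℝ) : ℂ)) = 2 := by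
      rw [show (∫ y : ℝ, ((2 * p y : ℝ) : ℂ)) = ((∫ y : ℝ, 2 * p y : ℝ) : ℂ) from
        integral_ofReal, integral_const_mul, hpint]
      norm_num
    have hsplitA : A = (∫ y, (e y - 1) * ((p y : ℝ) : ℂ)) + 2 := by
      rw [hAdef, ← h2p, ← integral_add hf2 h2int]
      refine integral_congr_ae (Eventually.of_forall fun y => ?_)
      push_cast
      ring
    have h1 : ‖∫ y, (e y - 1) * ((p y : ℝ) : ℂ)‖ ≤ |t| * C₁ := by
      refine le_trans (norm_integral_le_of_norm_le (hyp.const_mul |t|)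
        (Eventually.of_forall fun y => ?_)) ?_
      · rw [norm_mul, Complex.norm_real, Real.norm_eq_abs, abs_of_pos (hppos y)]
        calc ‖e y - 1‖ * p y ≤ (|t| * |y|) * p y :=
              mul_le_mul_of_nonneg_right (heb y) (hppos y).le
          _ = |t| * (|y| * p y) := by ring
      · rw [integral_const_mul]
    have h2 : ‖(2:ℂ)‖ ≤ ‖A‖ + ‖∫ y, (e y - 1) * ((p y : ℝ) : ℂ)‖ := by
      have h3 := norm_add_le A (-(∫ y, (e y - 1) * ((p y : ℝ) : ℂ)))
      rw [norm_neg] at h3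
      have h4 : A + -(∫ y, (e y - 1) * ((p y : ℝ) : ℂ)) = 2 := by
        rw [hsplitA]; ring
      rw [h4] at h3
      exact h3
    have h5 : ‖(2:ℂ)‖ = 2 := by norm_num
    linarith
  have hBub : ‖B‖ ≤ 4 * |c| * C₁ + 2 * C := by
    refine le_trans (norm_integral_le_of_norm_le hgint (Eventually.of_forall fun y => ?_)) ?_
    · rw [norm_mul, norm_mul, Complex.norm_real, Complex.norm_real, Real.norm_eq_abs,
        Real.norm_eq_abs, abs_of_pos (hppos y)]
      have h1 : ‖e y + 1‖ ≤ 2 := by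
        calc ‖e y + 1‖ ≤ ‖e y‖ + ‖(1:ℂ)‖ := norm_add_le _ _
          _ = 2 := by rw [hea]; norm_num
      have h2 : |2 * c * y + y ^ 2| ≤ 2 * |c| * |y| + y ^ 2 := by
        calc |2 * c * y + y ^ 2| ≤ |2 * c * y| + |y ^ 2| := abs_add_le _ _
          _ = 2 * |c| * |y| + y ^ 2 := by rw [abs_mul, abs_mul, abs_pow, sq_abs]; norm_num
      have h3 : ‖e y + 1‖ * |2 * c * y + y ^ 2| ≤ 2 * (2 * |c| * |y| + y ^ 2) :=
        mul_le_mul h1 h2 (abs_nonneg _) (by norm_num)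
      calc ‖e y + 1‖ * |2 * c * y + y ^ 2| * p y ≤ 2 * (2 * |c| * |y| + y ^ 2) * p y :=
            mul_le_mul_of_nonneg_right h3 (hppos y).le
        _ = 4 * |c| * (|y| * p y) + 2 * (y ^ 2 * p y) := by ring
    · rw [integral_add (hyp.const_mul _) (hpvar.const_mul _), integral_const_mul,
        integral_const_mul]
  rw [hrw, hof, hsplit, norm_neg]
  have hnormA : ‖((c ^ 2 : ℝ) : ℂ) * A‖ = c ^ 2 * ‖A‖ := by
    rw [norm_mul, Complex.norm_real, Real.norm_eq_abs, abs_of_nonneg (sq_nonneg c)]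
  have hlow : ‖((c ^ 2 : ℝ) : ℂ) * A‖ - ‖B‖ ≤ ‖((c ^ 2 : ℝ) : ℂ) * A + B‖ := by
    have h3 := norm_add_le (((c ^ 2 : ℝ) : ℂ) * A + B) (-B)
    rw [norm_neg, add_neg_cancel_right] at h3
    linarith
  have h3 : c ^ 2 * (2 - |t| * C₁) ≤ c ^ 2 * ‖A‖ :=
    mul_le_mul_of_nonneg_left hAlb (sq_nonneg c)
  linarith

set_option maxHeartbeats 1000000 in
/-- Counter-example: for the autoregressive chain `Xₙ = aX_{n-1} + θₙ` with `ξ(x) = x` and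
`g(x) = x²`, the quantity `sup_x (1+x²)⁻¹ |Q(t)g(x) − Qg(x)|` does not tend to `0` as `t → 0`;
hence `‖Q(t) − Q‖_{B_v}` does not tend to `0`. (Non-convergence is expressed by exhibiting
`ε > 0` and, for every `δ > 0`, a nonzero `t` with `|t| < δ` and a point `x` at which the
weighted difference is at least `ε`.) -/
theorem stmt4 (a : ℝ) (ha1 : -1 < a) (ha2 : a < 1) (ha0 : a ≠ 0)
    (p : ℝ → ℝ) (hpmeas : Measurable p) (hppos : ∀ y, 0 < p y)
    (hpint : ∫ y, p y = 1) (hpvar : Integrable (fun y => y ^ 2 * p y)) :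
    ∃ ε > (0 : ℝ), ∀ δ > (0 : ℝ), ∃ t : ℝ, t ≠ 0 ∧ |t| < δ ∧ ∃ x : ℝ,
      ε ≤ (1 + x ^ 2)⁻¹ *
        ‖(∫ y : ℝ, Complex.exp (Complex.I * ((t * (a * x + y) : ℝ) : ℂ)) *
              (((a * x + y : ℝ) : ℂ)) ^ 2 * ((p y : ℝ) : ℂ)) -
          ((∫ y : ℝ, (a * x + y) ^ 2 * p y : ℝ) : ℂ)‖ := by
  have hC1 : 0 ≤ ∫ y, |y| * p y :=
    integral_nonneg fun y => mul_nonneg (abs_nonneg _) (hppos y).le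
  have hC0 : 0 ≤ ∫ y, y ^ 2 * p y :=
    integral_nonneg fun y => mul_nonneg (sq_nonneg _) (hppos y).le
  obtain ⟨C₁, hC₁def⟩ : ∃ r, r = ∫ y, |y| * p y := ⟨_, rfl⟩
  obtain ⟨C, hCdef⟩ : ∃ r, r = ∫ y, y ^ 2 * p y := ⟨_, rfl⟩
  rw [← hC₁def] at hC1
  rw [← hCdef] at hC0
  have ha2pos : 0 < a ^ 2 := by positivity
  refine ⟨a ^ 2, ha2pos, fun δ hδ => ?_⟩
  have hπ : 0 < Real.pi := Real.pi_pos
  have hK0 : 0 < (Real.pi ^ 2 + 4 * Real.pi) * C₁ + 2 * C + a ^ 2 + 1 := by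
    have h1 : 0 ≤ (Real.pi ^ 2 + 4 * Real.pi) * C₁ := by positivity
    nlinarith [sq_nonneg a]
  obtain ⟨s, hs0, hsδ2, hs1, hsle⟩ :
      ∃ s : ℝ, 0 < s ∧ s ≤ δ / 2 ∧ s ≤ 1 ∧
        s ≤ Real.pi ^ 2 / ((Real.pi ^ 2 + 4 * Real.pi) * C₁ + 2 * C + a ^ 2 + 1) := by
    refine ⟨min (δ / 2) (min 1 (Real.pi ^ 2 /
        ((Real.pi ^ 2 + 4 * Real.pi) * C₁ + 2 * C + a ^ 2 + 1))),
      lt_min (by linarith) (lt_min one_pos (by positivity)), min_le_left _ _,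
      le_trans (min_le_right _ _) (min_le_left _ _),
      le_trans (min_le_right _ _) (min_le_right _ _)⟩
  have hsK : ((Real.pi ^ 2 + 4 * Real.pi) * C₁ + 2 * C + a ^ 2 + 1) * s ≤ Real.pi ^ 2 := by
    rw [le_div_iff₀ hK0] at hsle
    linarith [mul_comm s ((Real.pi ^ 2 + 4 * Real.pi) * C₁ + 2 * C + a ^ 2 + 1)]
  have hsδ : |s| < δ := by rw [abs_of_pos hs0]; linarith
  refine ⟨s, ne_of_gt hs0, hsδ, Real.pi / (a * s), ?_⟩
  have hax : a * (Real.pi / (a * s)) = Real.pi / s := by field_simp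
  have hc : s * (Real.pi / s) = Real.pi := by field_simp
  have hcore := core p hpmeas hppos hpint hpvar s (Real.pi / s) hc
  rw [← hC₁def, ← hCdef] at hcore
  simp only [hax]
  obtain ⟨c, hcdef⟩ : ∃ r, r = Real.pi / s := ⟨_, rfl⟩
  simp only [← hcdef] at hcore ⊢
  obtain ⟨x, hxdef⟩ : ∃ r, r = Real.pi / (a * s) := ⟨_, rfl⟩
  simp only [← hxdef]
  have hc0 : 0 < c := hcdef ▸ div_pos hπ hs0
  rw [abs_of_pos hs0, abs_of_pos hc0] at hcore
  have hcs : c * s = Real.pi := by rw [hcdef]; field_simp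
  have haxc : a * x = c := by rw [hxdef, hcdef]; field_simp
  have hx2 : a ^ 2 * x ^ 2 = c ^ 2 := by rw [← haxc]; ring
  have h1 : a ^ 2 * s ^ 2 + 2 * C * s ^ 2 + (Real.pi ^ 2 + 4 * Real.pi) * C₁ * s
      ≤ Real.pi ^ 2 := by
    nlinarith [hsK, hs0.le, hs1, hC0, sq_nonneg a,
      mul_nonneg (mul_nonneg (sq_nonneg a) hs0.le) (sub_nonneg.mpr hs1),
      mul_nonneg (mul_nonneg hC0 hs0.le) (sub_nonneg.mpr hs1)]
  have h2 : s ^ 2 * (a ^ 2 + 2 * C + c ^ 2 * s * C₁ + 4 * c * C₁)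
      ≤ s ^ 2 * c ^ 2 := by
    rw [show Real.pi = c * s from hcs.symm] at h1
    nlinarith [h1]
  have h3 : a ^ 2 + 2 * C + c ^ 2 * s * C₁ + 4 * c * C₁ ≤ c ^ 2 :=
    le_of_mul_le_mul_left (by linarith) (by positivity : (0:ℝ) < s ^ 2)
  have key : a ^ 2 * (1 + x ^ 2)
      ≤ c ^ 2 * (2 - s * C₁) - (4 * c * C₁ + 2 * C) := by nlinarith [h3, hx2]
  have h0 : (0:ℝ) < 1 + x ^ 2 := by positivity
  rw [le_inv_mul_iff₀ h0]
  calc (1 + x ^ 2) * a ^ 2 = a ^ 2 * (1 + x ^ 2) := mul_comm _ _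
    _ ≤ _ := le_trans key hcore
end

section
/- Let Q be a bounded operator on a Banach space B of (classes of) functions continuously embedded in L¹(π), where π is a probability measure, with ‖π(|Q(t)ⁿ w|)‖ controlled by the embedding. Suppose t ∈ ℝ^d, λ ∈ ℂ with |λ| = 1, A is a π-full Q-absorbing set, and w ∈ B is bounded with |w| equal to a nonzero constant on A, such that for all x ∈ A, e^{i⟨t,ξ(y)⟩} w(y) = λ w(x) for Q(x,dy)-a.e. y. Then the spectral radius of the Fourier operator Q(t) on B satisfies r(Q(t)) ≥ 1. -/
open MeasureTheory ProbabilityTheory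
open scoped InnerProductSpace ENNReal NNReal Topology
open Filter

/-- If `e^{i⟨t,ξ(y)⟩} w(y) = λ w(x)` for `Q(x,dy)`-a.e. `y` and all `x` in a `π`-full
`Q`-absorbing set `A`, where `|λ| = 1` and `w` is a bounded element of `B` whose modulus
is a nonzero constant on `A`, then the spectral radius of the Fourier operator `Q(t)` on
`B` is at least `1`.  Here `B` is a Banach space continuously embedded (via `ι`) into
`L¹(π)`, and `T` is the operator `Q(t)` acting on `B`. -/
theorem stmt5 {E : Type*} [MeasurableSpace E] {d : ℕ}
    (Q : Kernel E E) [IsMarkovKernel Q]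
    (π : Measure E) [IsProbabilityMeasure π]
    (hinv : π.bind (fun x => Q x) = π)
    (ξ : E → EuclideanSpace ℝ (Fin d)) (hξ : Measurable ξ)
    (t : EuclideanSpace ℝ (Fin d))
    (B : Type*) [NormedAddCommGroup B] [NormedSpace ℂ B] [CompleteSpace B]
    (ι : B →L[ℂ] Lp ℂ 1 π)
    (T : B →L[ℂ] B)
    -- `T` acts on `B` as the Fourier kernel `Q(t)`
    (hT : ∀ f : B, (ι (T f) : E → ℂ) =ᵐ[π]
      fun x => ∫ y, Complex.exp (Complex.I * (⟪t, ξ y⟫_ℝ : ℂ)) * (ι f : E → ℂ) y ∂(Q x))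
    (lam : ℂ) (hlam : ‖lam‖ = 1)
    (A : Set E) (hAmeas : MeasurableSet A) (hAfull : π A = 1)
    (hAabs : ∀ a ∈ A, Q a A = 1)
    (w : B)
    (hwbdd : ∃ M : ℝ, ∀ x, ‖(ι w : E → ℂ) x‖ ≤ M)
    (hwconst : ∃ c : ℝ, 0 < c ∧ ∀ x ∈ A, ‖(ι w : E → ℂ) x‖ = c)
    (hfe : ∀ x ∈ A, ∀ᵐ y ∂(Q x),
      Complex.exp (Complex.I * (⟪t, ξ y⟫_ℝ : ℂ)) * (ι w : E → ℂ) y = lam * (ι w : E → ℂ) x) :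
    1 ≤ spectralRadius ℂ T := by
  classical
  obtain ⟨c, hc, hwc⟩ := hwconst
  -- π-null sets are Q x-null for π-a.e. x
  have hnull : ∀ {s : Set E}, π s = 0 → ∀ᵐ x ∂π, Q x s = 0 := by
    intro s hs
    obtain ⟨u, hsu, hu, hu0⟩ := exists_measurable_superset_of_null hs
    have hb : π.bind (fun x => Q x) u = 0 := by rw [hinv]; exact hu0
    rw [Measure.bind_apply hu (Kernel.measurable Q).aemeasurable] at hb
    have h2 := (lintegral_eq_zero_iff (Q.measurable_coe hu)).mp hb
    filter_upwards [h2] with x hx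
    exact measure_mono_null hsu hx
  have hAae : ∀ᵐ x ∂π, x ∈ A := by
    rw [ae_iff]
    exact (prob_compl_eq_zero_iff hAmeas).mpr hAfull
  -- key induction
  have key : ∀ n : ℕ, ∀ᵐ x ∂π, x ∈ A →
      (ι ((T ^ n) w) : E → ℂ) x = lam ^ n * (ι w : E → ℂ) x := by
    intro n
    induction n with
    | zero =>
      filter_upwards with x _hx
      simp [pow_zero, ContinuousLinearMap.one_apply]
    | succ n ih =>
      have hihQ : ∀ᵐ x ∂π, Q x {y | ¬ (y ∈ A →
          (ι ((T ^ n) w) : E → ℂ) y = lam ^ n * (ι w : E → ℂ) y)} = 0 :=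
        hnull (ae_iff.mp ih)
      have hpow : (T ^ (n + 1)) w = T ((T ^ n) w) := by
        rw [pow_succ']; rfl
      rw [hpow]
      filter_upwards [hT ((T ^ n) w), hihQ] with x hx hQx hxA
      have hQA : ∀ᵐ y ∂(Q x), y ∈ A := by
        rw [ae_iff]
        exact (prob_compl_eq_zero_iff hAmeas).mpr (hAabs x hxA)
      have hQih : ∀ᵐ y ∂(Q x), y ∈ A →
          (ι ((T ^ n) w) : E → ℂ) y = lam ^ n * (ι w : E → ℂ) y := ae_iff.mpr hQx
      rw [hx]
      have h1 : (∫ y, Complex.exp (Complex.I * (⟪t, ξ y⟫_ℝ : ℂ)) *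
            (ι ((T ^ n) w) : E → ℂ) y ∂(Q x))
          = ∫ y, lam ^ n * (Complex.exp (Complex.I * (⟪t, ξ y⟫_ℝ : ℂ)) *
            (ι w : E → ℂ) y) ∂(Q x) := by
        refine integral_congr_ae ?_
        filter_upwards [hQA, hQih] with y hyA hy
        rw [hy hyA]; ring
      have h2 : (∫ y, Complex.exp (Complex.I * (⟪t, ξ y⟫_ℝ : ℂ)) *
            (ι w : E → ℂ) y ∂(Q x)) = lam * (ι w : E → ℂ) x := by
        rw [integral_congr_ae (hfe x hxA)]
        simp [measure_univ]
      rw [h1, integral_const_mul, h2]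
      ring
  -- a.e. norm of ι(Tⁿ w) is c
  have hnorm : ∀ n : ℕ, ‖ι ((T ^ n) w)‖ = c := by
    intro n
    have hae : ∀ᵐ x ∂π, ‖(ι ((T ^ n) w) : E → ℂ) x‖ = c := by
      filter_upwards [key n, hAae] with x hx hxA
      rw [hx hxA, norm_mul, norm_pow, hlam, one_pow, one_mul, hwc x hxA]
    rw [Lp.norm_def, eLpNorm_one_eq_lintegral_enorm]
    have : ∫⁻ x, ‖(ι ((T ^ n) w) : E → ℂ) x‖ₑ ∂π = ENNReal.ofReal c := by
      rw [lintegral_congr_ae (g := fun _ => ENNReal.ofReal c) ?_]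
      · simp [measure_univ]
      · filter_upwards [hae] with x hx
        rw [← hx, ofReal_norm_eq_enorm]
    rw [this, ENNReal.toReal_ofReal hc.le]
  -- upper bound
  have hub : ∀ n : ℕ, c ≤ ‖(T ^ n : B →L[ℂ] B)‖ * (‖ι‖ * ‖w‖) := by
    intro n
    calc c = ‖ι ((T ^ n) w)‖ := (hnorm n).symm
    _ ≤ ‖ι‖ * ‖(T ^ n) w‖ := ι.le_opNorm _
    _ ≤ ‖ι‖ * (‖(T ^ n : B →L[ℂ] B)‖ * ‖w‖) := by
        gcongr
        exact (T ^ n).le_opNorm w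
    _ = ‖(T ^ n : B →L[ℂ] B)‖ * (‖ι‖ * ‖w‖) := by ring
  have hD : 0 < ‖ι‖ * ‖w‖ := by
    by_contra h
    push_neg at h
    have := hub 0
    nlinarith [norm_nonneg (T ^ 0 : B →L[ℂ] B), mul_nonneg (norm_nonneg ι) (norm_nonneg w)]
  -- contradiction with spectral radius < 1
  by_contra hcon
  push_neg at hcon
  obtain ⟨ρ, hrρ, hρ1⟩ := exists_between hcon
  have hgel := spectrum.pow_nnnorm_pow_one_div_tendsto_nhds_spectralRadius T
  have hev1 : ∀ᶠ n : ℕ in atTop, ((‖T ^ n‖₊ : ℝ≥0∞) ^ (1 / (n : ℝ))) < ρ :=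
    hgel.eventually_lt_const hrρ
  set ε : ℝ := c / (‖ι‖ * ‖w‖) with hε
  have hεpos : 0 < ε := div_pos hc hD
  have hev2 : ∀ᶠ n : ℕ in atTop, ρ ^ n < ENNReal.ofReal ε := by
    have := ENNReal.tendsto_pow_atTop_nhds_zero_of_lt_one hρ1
    exact this.eventually_lt_const (by simpa using hεpos)
  obtain ⟨n, ⟨hn1, hn2⟩, hn3⟩ := ((hev1.and hev2).and (eventually_ge_atTop 1)).exists
  -- from hn1 : ‖Tⁿ‖₊ < ρ^n  (raise to power n)
  have hnn : (‖T ^ n‖₊ : ℝ≥0∞) ≤ ρ ^ n := by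
    have h := ENNReal.rpow_le_rpow hn1.le (by positivity : (0:ℝ) ≤ (n : ℝ))
    rwa [← ENNReal.rpow_mul,
      one_div, inv_mul_cancel₀ (by exact_mod_cast Nat.one_le_iff_ne_zero.mp hn3 : (n:ℝ) ≠ 0),
      ENNReal.rpow_one, ENNReal.rpow_natCast] at h
  have hlt : (‖T ^ n‖₊ : ℝ≥0∞) < ENNReal.ofReal ε := lt_of_le_of_lt hnn hn2
  have hTn : ‖(T ^ n : B →L[ℂ] B)‖ < ε := by
    rw [ENNReal.ofReal, ENNReal.coe_lt_coe] at hlt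
    calc ‖(T ^ n : B →L[ℂ] B)‖ = ((‖T ^ n‖₊ : ℝ≥0) : ℝ) := rfl
    _ < ((ε.toNNReal : ℝ≥0) : ℝ) := by exact_mod_cast hlt
    _ = ε := Real.coe_toNNReal ε hεpos.le
  have := hub n
  have : c < ε * (‖ι‖ * ‖w‖) := lt_of_le_of_lt this (by gcongr)
  rw [hε, div_mul_cancel₀ _ hD.ne'] at this
  exact lt_irrefl _ this
end

section
/- Let (Xₙ)_{n≥0} be a stationary Markov chain with transition kernel Q and stationary distribution π, ξ : E → ℝ^d π-integrable with π(ξ) = 0, and suppose the Poisson-equation solution ξ̆_t = Σ_{n≥0} Qⁿξ_t exists in L²(π) for ξ_t = ⟨t,ξ⟩. If the asymptotic variance ⟨Γt,t⟩ := π(ξ̆_t²) − π((Qξ̆_t)²) equals 0 for some t ≠ 0, then ⟨t, ξ(X₁)⟩ = g(X₀) − g(X₁) P_π-a.s. with g = Qξ̆_t. Conversely, if ⟨t, ξ(X₁)⟩ = g(X₀) − g(X₁) P_π-a.s. for some g ∈ L²(π) and t ≠ 0, then E_π[⟨t,Sₙ⟩²]/n → 0, where Sₙ = Σ_{k=1}^n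 ξ(X_k). -/
open MeasureTheory ProbabilityTheory Filter
open scoped InnerProductSpace

private noncomputable def qInt {E : Type*} [MeasurableSpace E] (Q : Kernel E E)
    (b : E → ℝ) (x : E) : ℝ := ∫ y, b y ∂(Q x)

private lemma sq_integral_le_integral_sq {E : Type*} [MeasurableSpace E]
    {ν : Measure E} [IsProbabilityMeasure ν] {f : E → ℝ}
    (hf : Integrable f ν) (hf2 : Integrable (fun x => f x ^ 2) ν) :
    (∫ x, f x ∂ν) ^ 2 ≤ ∫ x, f x ^ 2 ∂ν := by
  set m := ∫ x, f x ∂ν with hm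
  have h0 : 0 ≤ ∫ x, (f x - m) ^ 2 ∂ν := integral_nonneg fun x => sq_nonneg _
  have hexp : ∫ x, (f x - m) ^ 2 ∂ν = ∫ x, f x ^ 2 ∂ν - m ^ 2 := by
    have h1 : (fun x => (f x - m) ^ 2)
        = fun x => (f x ^ 2 - (2 * m) * f x) + m ^ 2 := by
      funext x; ring
    have hsub : Integrable (fun x => f x ^ 2 - 2 * m * f x) ν :=
      hf2.sub (hf.const_mul (2 * m))
    rw [h1, integral_add hsub (integrable_const _),
      integral_sub hf2 (hf.const_mul (2 * m)), integral_const_mul, integral_const]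
    simp only [measure_univ, probReal_univ, ENNReal.toReal_one, smul_eq_mul, one_mul]
    rw [← hm]; ring
  linarith

/-- Degeneracy of the asymptotic variance.  Let `(Xₙ)` be a stationary Markov chain with
kernel `Q` and stationary law `π` (each consecutive pair `(Xₙ, Xₙ₊₁)` has law `π ⊗ₘ Q`),
`ξ` `π`-centered, and `ξ̆_t` an `L²(π)` solution of the Poisson equation
`ξ̆_t = ⟨t,ξ⟩ + Qξ̆_t`.  If `π(ξ̆_t²) − π((Qξ̆_t)²) = 0` then
`⟨t,ξ(X₁)⟩ = g(X₀) − g(X₁)` a.s. with `g = Qξ̆_t`; conversely, if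
`⟨t,ξ(X₁)⟩ = g(X₀) − g(X₁)` a.s. for some `g ∈ L²(π)`, then `E_π[⟨t,Sₙ⟩²]/n → 0`. -/
theorem stmt7 {E : Type*} [MeasurableSpace E] {d : ℕ}
    (Q : Kernel E E) [IsMarkovKernel Q]
    (π : Measure E) [IsProbabilityMeasure π]
    (hinv : π.bind (fun x => Q x) = π)
    (ξ : E → EuclideanSpace ℝ (Fin d)) (hξmeas : Measurable ξ)
    (hξint : Integrable ξ π) (hξcent : ∫ x, ξ x ∂π = 0)
    {Ω : Type*} [MeasurableSpace Ω] (P : Measure Ω) [IsProbabilityMeasure P]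
    (X : ℕ → Ω → E) (hXmeas : ∀ n, Measurable (X n))
    (hpair : ∀ n : ℕ, Measure.map (fun ω => (X n ω, X (n + 1) ω)) P = π ⊗ₘ Q)
    (t : EuclideanSpace ℝ (Fin d)) (ht : t ≠ 0)
    (bξ : E → ℝ) (hbmeas : Measurable bξ) (hbL2 : MemLp bξ 2 π)
    (hPoisson : ∀ᵐ x ∂π, bξ x = ⟪t, ξ x⟫_ℝ + ∫ y, bξ y ∂(Q x)) :
    ((∫ x, (bξ x) ^ 2 ∂π) - ∫ x, (∫ y, bξ y ∂(Q x)) ^ 2 ∂π = 0 →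
      ∀ᵐ ω ∂P, ⟪t, ξ (X 1 ω)⟫_ℝ =
        (∫ y, bξ y ∂(Q (X 0 ω))) - ∫ y, bξ y ∂(Q (X 1 ω))) ∧
    (∀ g : E → ℝ, Measurable g → MemLp g 2 π →
      (∀ᵐ ω ∂P, ⟪t, ξ (X 1 ω)⟫_ℝ = g (X 0 ω) - g (X 1 ω)) →
      Tendsto
        (fun n : ℕ =>
          (∫ ω, (⟪t, ∑ k ∈ Finset.Icc 1 n, ξ (X k ω)⟫_ℝ) ^ 2 ∂P) / n)
        atTop (nhds 0)) := by
  classical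
  -- the second-coordinate marginal of `π ⊗ₘ Q` is `π.bind Q = π`
  have hsnd : (π ⊗ₘ Q).map Prod.snd = π := by
    ext s hs
    rw [Measure.map_apply measurable_snd hs,
      Measure.compProd_apply (measurable_snd hs)]
    have h1 : ∀ a : E, (Prod.mk a ⁻¹' (Prod.snd ⁻¹' s)) = s := fun a => rfl
    simp_rw [h1]
    rw [← Measure.bind_apply hs (Kernel.measurable Q).aemeasurable, hinv]
  have hfst : (π ⊗ₘ Q).map Prod.fst = π := Measure.fst_compProd π Q
  have mpsnd : MeasurePreserving (Prod.snd : E × E → E) (π ⊗ₘ Q) π :=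
    ⟨measurable_snd, hsnd⟩
  have mpfst : MeasurePreserving (Prod.fst : E × E → E) (π ⊗ₘ Q) π :=
    ⟨measurable_fst, hfst⟩
  have hpm : ∀ n : ℕ, Measurable fun ω => (X n ω, X (n + 1) ω) := fun n =>
    (hXmeas n).prodMk (hXmeas (n + 1))
  have hXlaw : ∀ n : ℕ, Measure.map (X n) P = π := by
    intro n
    cases n with
    | zero =>
      have h := hpair 0
      have h2 : Measure.map (X 0) P
          = (Measure.map (fun ω => (X 0 ω, X 1 ω)) P).map Prod.fst := by
        rw [Measure.map_map measurable_fst (hpm 0)]; rfl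
      rw [h2, h, hfst]
    | succ n =>
      have h := hpair n
      have h2 : Measure.map (X (n + 1)) P
          = (Measure.map (fun ω => (X n ω, X (n + 1) ω)) P).map Prod.snd := by
        rw [Measure.map_map measurable_snd (hpm n)]; rfl
      rw [h2, h, hsnd]
  constructor
  · -- degenerate variance implies coboundary
    intro h0
    set g : E → ℝ := qInt Q bξ with hg_def
    have hgsm : StronglyMeasurable g := by
      have h1 : StronglyMeasurable (fun p : E × E => bξ p.2) :=
        (hbmeas.comp measurable_snd).stronglyMeasurable
      exact h1.integral_kernel_prod_right'
    have hgmeas : Measurable g := hgsm.measurable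
    have hb2μ : MemLp (fun p : E × E => bξ p.2) 2 (π ⊗ₘ Q) :=
      hbL2.comp_measurePreserving mpsnd
    have hbint2μ : Integrable (fun p : E × E => bξ p.2 ^ 2) (π ⊗ₘ Q) :=
      hb2μ.integrable_sq
    have hbintμ : Integrable (fun p : E × E => bξ p.2) (π ⊗ₘ Q) :=
      hb2μ.integrable one_le_two
    have haeint2 : ∀ᵐ x ∂π, Integrable (fun y => bξ y ^ 2) (Q x) :=
      ((Measure.integrable_compProd_iff hbint2μ.aestronglyMeasurable).mp hbint2μ).1
    have haeint1 : ∀ᵐ x ∂π, Integrable bξ (Q x) :=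
      ((Measure.integrable_compProd_iff hbintμ.aestronglyMeasurable).mp hbintμ).1
    have hgsq_le : ∀ᵐ x ∂π, g x ^ 2 ≤ ∫ y, bξ y ^ 2 ∂(Q x) := by
      filter_upwards [haeint1, haeint2] with x h1 h2
      exact sq_integral_le_integral_sq h1 h2
    have hQint : Integrable (fun x => ∫ y, bξ y ^ 2 ∂(Q x)) π := by
      have h2 := ((Measure.integrable_compProd_iff
        hbint2μ.aestronglyMeasurable).mp hbint2μ).2
      refine h2.congr (Filter.Eventually.of_forall fun x => ?_)
      refine integral_congr_ae (Filter.Eventually.of_forall fun y => ?_)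
      simp [Real.norm_eq_abs, abs_pow, sq_abs]
    have hgL2 : MemLp g 2 π := by
      rw [memLp_two_iff_integrable_sq hgsm.aestronglyMeasurable]
      refine Integrable.mono' hQint (hgmeas.pow_const 2).aestronglyMeasurable ?_
      filter_upwards [hgsq_le] with x hx
      rwa [Real.norm_eq_abs, abs_of_nonneg (sq_nonneg _)]
    have hgμ : MemLp (fun p : E × E => g p.1) 2 (π ⊗ₘ Q) :=
      hgL2.comp_measurePreserving mpfst
    have hgsqμ : Integrable (fun p : E × E => g p.1 ^ 2) (π ⊗ₘ Q) :=
      hgμ.integrable_sq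
    have hcross_int : Integrable (fun p : E × E => g p.1 * bξ p.2) (π ⊗ₘ Q) := by
      refine Integrable.mono' ((hgsqμ.add hbint2μ).div_const 2)
        (hgμ.aestronglyMeasurable.mul hb2μ.aestronglyMeasurable)
        (Filter.Eventually.of_forall fun p => ?_)
      simp only [Pi.add_apply]
      rw [Real.norm_eq_abs, abs_mul]
      nlinarith [sq_nonneg (|g p.1| - |bξ p.2|), sq_abs (g p.1), sq_abs (bξ p.2),
        abs_nonneg (g p.1), abs_nonneg (bξ p.2)]
    have hcross : ∫ p : E × E, g p.1 * bξ p.2 ∂(π ⊗ₘ Q) = ∫ x, g x ^ 2 ∂π := by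
      rw [Measure.integral_compProd hcross_int]
      refine integral_congr_ae (Filter.Eventually.of_forall fun x => ?_)
      dsimp only
      rw [integral_const_mul]
      have h1 : ∫ y, bξ y ∂(Q x) = g x := rfl
      rw [h1, ← pow_two]
    have hbsq : ∫ p : E × E, bξ p.2 ^ 2 ∂(π ⊗ₘ Q) = ∫ x, bξ x ^ 2 ∂π := by
      rw [← integral_map measurable_snd.aemeasurable
        (hbmeas.pow_const 2).aestronglyMeasurable, hsnd]
    have hgsq_eq : ∫ p : E × E, g p.1 ^ 2 ∂(π ⊗ₘ Q) = ∫ x, g x ^ 2 ∂π := by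
      rw [← integral_map measurable_fst.aemeasurable
        (hgmeas.pow_const 2).aestronglyMeasurable, hfst]
    -- integral of the square of the martingale increment vanishes
    have hFint : Integrable (fun p : E × E => (bξ p.2 - g p.1) ^ 2) (π ⊗ₘ Q) :=
      (hb2μ.sub hgμ).integrable_sq
    have hFval : ∫ p : E × E, (bξ p.2 - g p.1) ^ 2 ∂(π ⊗ₘ Q) = 0 := by
      have hexp : (fun p : E × E => (bξ p.2 - g p.1) ^ 2)
          = fun p => (bξ p.2 ^ 2 - 2 * (g p.1 * bξ p.2)) + g p.1 ^ 2 := by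
        funext p; ring
      have hsub : Integrable (fun p : E × E => bξ p.2 ^ 2 - 2 * (g p.1 * bξ p.2))
          (π ⊗ₘ Q) := hbint2μ.sub (hcross_int.const_mul 2)
      rw [hexp, integral_add hsub hgsqμ,
        integral_sub hbint2μ (hcross_int.const_mul 2), integral_const_mul,
        hbsq, hcross, hgsq_eq]
      have h0' : (∫ x, bξ x ^ 2 ∂π) - ∫ x, g x ^ 2 ∂π = 0 := h0
      linarith
    have haeF : ∀ᵐ p ∂(π ⊗ₘ Q), (bξ p.2 - g p.1) ^ 2 = 0 := by
      have h := (integral_eq_zero_iff_of_nonneg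
        (fun p : E × E => sq_nonneg (bξ p.2 - g p.1)) hFint).mp hFval
      filter_upwards [h] with p hp using hp
    have haeq : ∀ᵐ p ∂(π ⊗ₘ Q), bξ p.2 = g p.1 := by
      filter_upwards [haeF] with p hp
      have h1 : bξ p.2 - g p.1 = 0 := by
        exact (pow_eq_zero_iff (two_ne_zero)).mp hp
      linarith
    have hsetE : MeasurableSet {x : E | bξ x = ⟪t, ξ x⟫_ℝ + g x} :=
      measurableSet_eq_fun hbmeas ((measurable_const.inner hξmeas).add hgmeas)
    have hPo2 : ∀ᵐ p ∂(π ⊗ₘ Q), bξ p.2 = ⟪t, ξ p.2⟫_ℝ + g p.2 := by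
      refine (ae_map_iff measurable_snd.aemeasurable hsetE).mp ?_
      rw [hsnd]
      filter_upwards [hPoisson] with x hx using hx
    have hfinal : ∀ᵐ p ∂(π ⊗ₘ Q), ⟪t, ξ p.2⟫_ℝ = g p.1 - g p.2 := by
      filter_upwards [haeq, hPo2] with p h1 h2
      rw [h2] at h1
      linarith
    have hsetP : MeasurableSet {p : E × E | ⟪t, ξ p.2⟫_ℝ = g p.1 - g p.2} :=
      measurableSet_eq_fun
        (measurable_const.inner (hξmeas.comp measurable_snd))
        ((hgmeas.comp measurable_fst).sub (hgmeas.comp measurable_snd))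
    have hfin2 : ∀ᵐ ω ∂P, ⟪t, ξ (X 1 ω)⟫_ℝ = g (X 0 ω) - g (X 1 ω) :=
      (ae_map_iff (hpm 0).aemeasurable hsetP).mp (by rw [hpair 0]; exact hfinal)
    filter_upwards [hfin2] with ω hω using hω
  · -- coboundary implies vanishing normalized variance
    intro g hgmeas hgL2 hae
    have hset : MeasurableSet {p : E × E | ⟪t, ξ p.2⟫_ℝ = g p.1 - g p.2} := by
      exact measurableSet_eq_fun
        (measurable_const.inner (hξmeas.comp measurable_snd))
        ((hgmeas.comp measurable_fst).sub (hgmeas.comp measurable_snd))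
    have hμae : ∀ᵐ p ∂(π ⊗ₘ Q), ⟪t, ξ p.2⟫_ℝ = g p.1 - g p.2 := by
      rw [← hpair 0]
      exact (ae_map_iff (hpm 0).aemeasurable hset).mpr hae
    have hk : ∀ n : ℕ, ∀ᵐ ω ∂P,
        ⟪t, ξ (X (n + 1) ω)⟫_ℝ = g (X n ω) - g (X (n + 1) ω) := fun n =>
      (ae_map_iff (hpm n).aemeasurable hset).mp (by rw [hpair n]; exact hμae)
    have htel : ∀ n : ℕ, ∀ᵐ ω ∂P,
        ⟪t, ∑ k ∈ Finset.Icc 1 n, ξ (X k ω)⟫_ℝ = g (X 0 ω) - g (X n ω) := by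
      intro n
      filter_upwards [ae_all_iff.2 hk] with ω hω
      rw [inner_sum]
      have h1 : ∑ k ∈ Finset.Icc 1 n, ⟪t, ξ (X k ω)⟫_ℝ
          = ∑ j ∈ Finset.range n, ⟪t, ξ (X (1 + j) ω)⟫_ℝ := by
        rw [← Finset.Ico_add_one_right_eq_Icc, Finset.sum_Ico_eq_sum_range]
        simp
      rw [h1]
      have h2 : ∀ j ∈ Finset.range n, ⟪t, ξ (X (1 + j) ω)⟫_ℝ
          = g (X j ω) - g (X (j + 1) ω) := by
        intro j _
        rw [add_comm 1 j]
        exact hω j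
      rw [Finset.sum_congr rfl h2]
      exact Finset.sum_range_sub' (fun j => g (X j ω)) n
    have hMem : ∀ n : ℕ, MemLp (fun ω => g (X n ω)) 2 P := fun n =>
      hgL2.comp_measurePreserving ⟨hXmeas n, hXlaw n⟩
    have hint_sq : ∀ n : ℕ, ∫ ω, g (X n ω) ^ 2 ∂P = ∫ x, g x ^ 2 ∂π := by
      intro n
      rw [← hXlaw n, integral_map (hXmeas n).aemeasurable
        (hgmeas.pow_const 2).aestronglyMeasurable]
    set C : ℝ := 4 * ∫ x, g x ^ 2 ∂π with hC_def
    have hCnn : 0 ≤ ∫ x, g x ^ 2 ∂π := integral_nonneg fun x => sq_nonneg _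
    have hbound : ∀ n : ℕ,
        ∫ ω, (⟪t, ∑ k ∈ Finset.Icc 1 n, ξ (X k ω)⟫_ℝ) ^ 2 ∂P ≤ C := by
      intro n
      have hdiff : MemLp (fun ω => g (X 0 ω) - g (X n ω)) 2 P :=
        (hMem 0).sub (hMem n)
      have heq : ∫ ω, (⟪t, ∑ k ∈ Finset.Icc 1 n, ξ (X k ω)⟫_ℝ) ^ 2 ∂P
          = ∫ ω, (g (X 0 ω) - g (X n ω)) ^ 2 ∂P := by
        refine integral_congr_ae ?_
        filter_upwards [htel n] with ω hω
        rw [hω]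
      rw [heq]
      have hle : ∫ ω, (g (X 0 ω) - g (X n ω)) ^ 2 ∂P
          ≤ ∫ ω, (2 * g (X 0 ω) ^ 2 + 2 * g (X n ω) ^ 2) ∂P := by
        refine integral_mono hdiff.integrable_sq
          (((hMem 0).integrable_sq.const_mul 2).add
            ((hMem n).integrable_sq.const_mul 2)) ?_
        intro ω
        dsimp only
        nlinarith [sq_nonneg (g (X 0 ω) + g (X n ω))]
      have heq2 : ∫ ω, (2 * g (X 0 ω) ^ 2 + 2 * g (X n ω) ^ 2) ∂P = C := by
        rw [integral_add ((hMem 0).integrable_sq.const_mul 2)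
          ((hMem n).integrable_sq.const_mul 2), integral_const_mul,
          integral_const_mul, hint_sq 0, hint_sq n, hC_def]
        ring
      linarith
    refine squeeze_zero (fun n => ?_) (fun n => ?_)
      (tendsto_const_div_atTop_nhds_zero_nat C)
    · exact div_nonneg (integral_nonneg fun ω => sq_nonneg _) (Nat.cast_nonneg n)
    · exact div_le_div_of_nonneg_right (hbound n) (Nat.cast_nonneg n)
end

section
/- Let B ↪ B̃ be Banach spaces of functions, and suppose that for all t in a neighbourhood and z in a region D of ℂ, the operators R_z(t) = (z − Q(t))^{−1} exist and satisfy: ‖R_z(t)‖ uniformly bounded as operators on suitable intermediate spaces B = B_θ ↪ B_{θ₁} ↪ B_{θ₂} ↪ B_{θ₃} = B̃, Q(·) ∈ C¹ from a neighbourhood of t₀ into L(B_{θ₁},B_{θ₂}), Q(·) continuous into L(B_{θ₂},B_{θ₃}), and R_z(·) continuous from B into L(B,B_{θ₁}) uniformly in z. Then t ↦ R_z(t), viewed in L(B, B̃), is differentiable at t₀ with derivative R_z(t₀) Q'(t₀) R_z(t₀), uniformly in z ∈ D. -/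
set_option maxHeartbeats 1000000 in
set_option synthInstance.maxHeartbeats 1000000 in
/-- Differentiability of the resolvent `t ↦ R_z(t) = (z − Q(t))⁻¹` viewed in `L(B, B̃)`,
along a chain of Banach spaces `B = B₀ ↪ B₁ ↪ B₂ ↪ B₃ = B̃` (embeddings `J01, J12, J23`).
The operators `Q(t)` and `R_z(t)` act compatibly on each level; `‖R_z(t)‖` is uniformly
bounded on each level, `Q(·)` is `C¹` from a neighbourhood of `t₀` into `L(B₁,B₂)`,
continuous into `L(B₂,B₃)`, and `R_z(·)` is continuous into `L(B₀,B₁)` uniformly in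
`z ∈ D`.  Then `t ↦ R_z(t) ∈ L(B₀,B₃)` is differentiable at `t₀` with derivative
`R_z(t₀) Q'(t₀) R_z(t₀)`, uniformly in `z ∈ D`. -/
theorem stmt11
    {B0 B1 B2 B3 : Type*}
    [NormedAddCommGroup B0] [NormedSpace ℂ B0] [CompleteSpace B0]
    [NormedAddCommGroup B1] [NormedSpace ℂ B1] [CompleteSpace B1]
    [NormedAddCommGroup B2] [NormedSpace ℂ B2] [CompleteSpace B2]
    [NormedAddCommGroup B3] [NormedSpace ℂ B3] [CompleteSpace B3]
    (J01 : B0 →L[ℂ] B1) (J12 : B1 →L[ℂ] B2) (J23 : B2 →L[ℂ] B3)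
    (U : Set ℝ) (hU : IsOpen U) (t₀ : ℝ) (ht₀ : t₀ ∈ U) (D : Set ℂ)
    (Qe0 : ℝ → B0 →L[ℂ] B0) (Qe1 : ℝ → B1 →L[ℂ] B1)
    (Qe2 : ℝ → B2 →L[ℂ] B2) (Qe3 : ℝ → B3 →L[ℂ] B3)
    (R0 : ℂ → ℝ → B0 →L[ℂ] B0) (R1 : ℂ → ℝ → B1 →L[ℂ] B1)
    (R2 : ℂ → ℝ → B2 →L[ℂ] B2) (R3 : ℂ → ℝ → B3 →L[ℂ] B3)
    -- `R_z(t)` is the inverse of `z − Q(t)` on each level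
    (hinv0 : ∀ z ∈ D, ∀ t ∈ U, (z • (1 : B0 →L[ℂ] B0) - Qe0 t) * R0 z t = 1 ∧
      R0 z t * (z • (1 : B0 →L[ℂ] B0) - Qe0 t) = 1)
    (hinv1 : ∀ z ∈ D, ∀ t ∈ U, (z • (1 : B1 →L[ℂ] B1) - Qe1 t) * R1 z t = 1 ∧
      R1 z t * (z • (1 : B1 →L[ℂ] B1) - Qe1 t) = 1)
    (hinv2 : ∀ z ∈ D, ∀ t ∈ U, (z • (1 : B2 →L[ℂ] B2) - Qe2 t) * R2 z t = 1 ∧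
      R2 z t * (z • (1 : B2 →L[ℂ] B2) - Qe2 t) = 1)
    (hinv3 : ∀ z ∈ D, ∀ t ∈ U, (z • (1 : B3 →L[ℂ] B3) - Qe3 t) * R3 z t = 1 ∧
      R3 z t * (z • (1 : B3 →L[ℂ] B3) - Qe3 t) = 1)
    -- compatibility of `Q(t)` and `R_z(t)` with the embeddings
    (hQc0 : ∀ t ∈ U, J01.comp (Qe0 t) = (Qe1 t).comp J01)
    (hQc1 : ∀ t ∈ U, J12.comp (Qe1 t) = (Qe2 t).comp J12)
    (hQc2 : ∀ t ∈ U, J23.comp (Qe2 t) = (Qe3 t).comp J23)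
    (hRc0 : ∀ z ∈ D, ∀ t ∈ U, J01.comp (R0 z t) = (R1 z t).comp J01)
    (hRc1 : ∀ z ∈ D, ∀ t ∈ U, J12.comp (R1 z t) = (R2 z t).comp J12)
    (hRc2 : ∀ z ∈ D, ∀ t ∈ U, J23.comp (R2 z t) = (R3 z t).comp J23)
    -- uniform bounds for the resolvents
    (M : ℝ)
    (hM : ∀ z ∈ D, ∀ t ∈ U, ‖R0 z t‖ ≤ M ∧ ‖R1 z t‖ ≤ M ∧ ‖R2 z t‖ ≤ M ∧ ‖R3 z t‖ ≤ M)
    -- `Q(·) ∈ C¹` from `U` into `L(B₁,B₂)`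
    (Q12' : ℝ → B1 →L[ℂ] B2)
    (hQ12deriv : ∀ t ∈ U, HasDerivAt (fun s => J12.comp (Qe1 s)) (Q12' t) t)
    (hQ12'cont : ContinuousOn Q12' U)
    -- `Q(·)` continuous into `L(B₂,B₃)`
    (hQ23cont : ContinuousOn (fun t => J23.comp (Qe2 t)) U)
    -- `R_z(·)` continuous into `L(B₀,B₁)` uniformly in `z ∈ D`
    (hRcont : ∀ ε > (0 : ℝ), ∃ δ > (0 : ℝ), ∀ z ∈ D, ∀ t ∈ U, |t - t₀| < δ →
      ‖J01.comp (R0 z t) - J01.comp (R0 z t₀)‖ ≤ ε) :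
    ∀ ε > (0 : ℝ), ∃ δ > (0 : ℝ), ∀ z ∈ D, ∀ t ∈ U, |t - t₀| < δ →
      ‖(J23.comp (J12.comp J01)).comp (R0 z t) -
        (J23.comp (J12.comp J01)).comp (R0 z t₀) -
        (t - t₀) •
          ((J23.comp (R2 z t₀)).comp ((Q12' t₀).comp (J01.comp (R0 z t₀))))‖ ≤
        ε * |t - t₀| := by
  intro ε hε
  classical
  set M' : ℝ := max M 0 with hM'def
  have hM'0 : 0 ≤ M' := le_max_right _ _
  set K1 : ℝ := ‖J23‖ * M' * (‖J01‖ * M') with hK1def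
  set K2 : ℝ := ‖J23‖ * M' * ‖Q12' t₀‖ with hK2def
  have hK1 : 0 ≤ K1 := by positivity
  have hK2 : 0 ≤ K2 := by positivity
  set ε₁ : ℝ := ε / (2 * (K1 + 1)) with hε₁def
  set ε₂ : ℝ := ε / (2 * (K2 + 1)) with hε₂def
  have hε₁ : 0 < ε₁ := by positivity
  have hε₂ : 0 < ε₂ := by positivity
  -- little-o from differentiability at t₀
  have hderiv := hQ12deriv t₀ ht₀
  rw [hasDerivAt_iff_isLittleO] at hderiv
  have hlo := hderiv.def hε₁
  rw [Metric.eventually_nhds_iff] at hlo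
  obtain ⟨δ₁, hδ₁, hlo⟩ := hlo
  obtain ⟨δ₂, hδ₂, hR⟩ := hRcont ε₂ hε₂
  refine ⟨min δ₁ δ₂, lt_min hδ₁ hδ₂, fun z hz t ht htδ => ?_⟩
  have htδ₁ : |t - t₀| < δ₁ := lt_of_lt_of_le htδ (min_le_left _ _)
  have htδ₂ : |t - t₀| < δ₂ := lt_of_lt_of_le htδ (min_le_right _ _)
  -- pointwise compatibility lemmas
  have p0 : ∀ s ∈ U, ∀ y, J01 (R0 z s y) = R1 z s (J01 y) :=
    fun s hs y => DFunLike.congr_fun (hRc0 z hz s hs) y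
  have p1 : ∀ s ∈ U, ∀ y, J12 (R1 z s y) = R2 z s (J12 y) :=
    fun s hs y => DFunLike.congr_fun (hRc1 z hz s hs) y
  have p2 : ∀ s ∈ U, ∀ y, J23 (R2 z s y) = R3 z s (J23 y) :=
    fun s hs y => DFunLike.congr_fun (hRc2 z hz s hs) y
  have q1 : ∀ s ∈ U, ∀ y, J12 (Qe1 s y) = Qe2 s (J12 y) :=
    fun s hs y => DFunLike.congr_fun (hQc1 s hs) y
  have q2 : ∀ s ∈ U, ∀ y, J23 (Qe2 s y) = Qe3 s (J23 y) :=
    fun s hs y => DFunLike.congr_fun (hQc2 s hs) y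
  -- second resolvent identity on level 3
  have key3 : R3 z t - R3 z t₀ = R3 z t₀ * ((Qe3 t - Qe3 t₀) * R3 z t) := by
    have h1 := (hinv3 z hz t ht).1
    have h2 := (hinv3 z hz t₀ ht₀).2
    have hQ : Qe3 t - Qe3 t₀ =
        (z • (1 : B3 →L[ℂ] B3) - Qe3 t₀) - (z • (1 : B3 →L[ℂ] B3) - Qe3 t) := by abel
    rw [hQ, sub_mul, mul_sub, ← mul_assoc, h2, h1, one_mul, mul_one]
  -- the key identity, transported to L(B0, B3)
  have keyid : (J23.comp (J12.comp J01)).comp (R0 z t) -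
      (J23.comp (J12.comp J01)).comp (R0 z t₀) =
      (J23.comp (R2 z t₀)).comp
        ((J12.comp (Qe1 t) - J12.comp (Qe1 t₀)).comp (J01.comp (R0 z t))) := by
    ext x
    have hk := DFunLike.congr_fun key3 (J23 (J12 (J01 x)))
    simp only [ContinuousLinearMap.sub_apply, ContinuousLinearMap.mul_apply,
      map_sub] at hk
    simp only [ContinuousLinearMap.comp_apply, ContinuousLinearMap.sub_apply, map_sub]
    simp only [p0 t ht, p0 t₀ ht₀, p1 t ht, p1 t₀ ht₀, q1 t ht, q1 t₀ ht₀,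
      q2 t ht, q2 t₀ ht₀, p2 t ht, p2 t₀ ht₀]
    exact hk
  -- abbreviations
  set T : B2 →L[ℂ] B3 := J23.comp (R2 z t₀) with hTdef
  set S : ℝ → (B0 →L[ℂ] B1) := fun s => J01.comp (R0 z s) with hSdef
  set ΔQ : B1 →L[ℂ] B2 := J12.comp (Qe1 t) - J12.comp (Qe1 t₀) with hΔdef
  -- rearrangement
  have rearr : (J23.comp (J12.comp J01)).comp (R0 z t) -
      (J23.comp (J12.comp J01)).comp (R0 z t₀) -
      (t - t₀) • (T.comp ((Q12' t₀).comp (S t₀))) =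
      T.comp ((ΔQ - (t - t₀) • Q12' t₀).comp (S t)) +
        (t - t₀) • (T.comp ((Q12' t₀).comp (S t - S t₀))) := by
    rw [keyid]
    simp only [ContinuousLinearMap.sub_comp, ContinuousLinearMap.comp_sub,
      ContinuousLinearMap.smul_comp, ContinuousLinearMap.comp_smul, smul_sub]
    abel
  -- norm bounds
  have hMT : ‖T‖ ≤ ‖J23‖ * M' := by
    refine le_trans (ContinuousLinearMap.opNorm_comp_le _ _) ?_
    exact mul_le_mul_of_nonneg_left (le_trans (hM z hz t₀ ht₀).2.2.1 (le_max_left _ _))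
      (norm_nonneg _)
  have hMS : ∀ s ∈ U, ‖S s‖ ≤ ‖J01‖ * M' := by
    intro s hs
    refine le_trans (ContinuousLinearMap.opNorm_comp_le _ _) ?_
    exact mul_le_mul_of_nonneg_left (le_trans (hM z hz s hs).1 (le_max_left _ _))
      (norm_nonneg _)
  have hΔbound : ‖ΔQ - (t - t₀) • Q12' t₀‖ ≤ ε₁ * |t - t₀| := by
    have := hlo (show dist t t₀ < δ₁ by rwa [Real.dist_eq])
    simpa [Real.norm_eq_abs] using this
  have hEbound : ‖S t - S t₀‖ ≤ ε₂ := hR z hz t ht htδ₂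
  have hA : ‖T.comp ((ΔQ - (t - t₀) • Q12' t₀).comp (S t))‖ ≤ K1 * (ε₁ * |t - t₀|) := by
    calc ‖T.comp ((ΔQ - (t - t₀) • Q12' t₀).comp (S t))‖
        ≤ ‖T‖ * (‖ΔQ - (t - t₀) • Q12' t₀‖ * ‖S t‖) := by
          refine le_trans (ContinuousLinearMap.opNorm_comp_le _ _) ?_
          exact mul_le_mul_of_nonneg_left (ContinuousLinearMap.opNorm_comp_le _ _)
            (norm_nonneg _)
      _ ≤ (‖J23‖ * M') * ((ε₁ * |t - t₀|) * (‖J01‖ * M')) := by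
          apply mul_le_mul hMT _ (by positivity) (by positivity)
          exact mul_le_mul hΔbound (hMS t ht) (norm_nonneg _) (by positivity)
      _ = K1 * (ε₁ * |t - t₀|) := by rw [hK1def]; ring
  have hB : ‖(t - t₀) • (T.comp ((Q12' t₀).comp (S t - S t₀)))‖ ≤
      |t - t₀| * (K2 * ε₂) := by
    refine le_trans (ContinuousLinearMap.opNorm_smul_le _ _) ?_
    rw [Real.norm_eq_abs]
    apply mul_le_mul_of_nonneg_left _ (abs_nonneg _)
    calc ‖T.comp ((Q12' t₀).comp (S t - S t₀))‖
        ≤ ‖T‖ * (‖Q12' t₀‖ * ‖S t - S t₀‖) := by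
          refine le_trans (ContinuousLinearMap.opNorm_comp_le _ _) ?_
          exact mul_le_mul_of_nonneg_left (ContinuousLinearMap.opNorm_comp_le _ _)
            (norm_nonneg _)
      _ ≤ (‖J23‖ * M') * (‖Q12' t₀‖ * ε₂) := by
          apply mul_le_mul hMT _ (by positivity) (by positivity)
          exact mul_le_mul_of_nonneg_left hEbound (norm_nonneg _)
      _ = K2 * ε₂ := by rw [hK2def]; ring
  have hsum : K1 * (ε₁ * |t - t₀|) + |t - t₀| * (K2 * ε₂) ≤ ε * |t - t₀| := by
    have h1 : K1 * ε₁ ≤ ε / 2 := by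
      have : ε₁ * (K1 + 1) = ε / 2 := by
        rw [hε₁def]; field_simp
      nlinarith [hε₁.le]
    have h2 : K2 * ε₂ ≤ ε / 2 := by
      have : ε₂ * (K2 + 1) = ε / 2 := by
        rw [hε₂def]; field_simp
      nlinarith [hε₂.le]
    nlinarith [abs_nonneg (t - t₀)]
  calc ‖(J23.comp (J12.comp J01)).comp (R0 z t) -
        (J23.comp (J12.comp J01)).comp (R0 z t₀) -
        (t - t₀) • ((J23.comp (R2 z t₀)).comp ((Q12' t₀).comp (J01.comp (R0 z t₀))))‖
      = ‖T.comp ((ΔQ - (t - t₀) • Q12' t₀).comp (S t)) +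
          (t - t₀) • (T.comp ((Q12' t₀).comp (S t - S t₀)))‖ := by rw [← rearr]
    _ ≤ ‖T.comp ((ΔQ - (t - t₀) • Q12' t₀).comp (S t))‖ +
          ‖(t - t₀) • (T.comp ((Q12' t₀).comp (S t - S t₀)))‖ := norm_add_le _ _
    _ ≤ K1 * (ε₁ * |t - t₀|) + |t - t₀| * (K2 * ε₂) := add_le_add hA hB
    _ ≤ ε * |t - t₀| := hsum
end

section
/- Let G = {t ∈ ℝ^d : r(Q(t)) = 1} where for each t, r(Q(t)) ≤ 1, and suppose: (a) for every t ∈ G there exist λ_t ∈ ℂ with |λ_t| = 1, a π-full Q-absorbing set A_t, and a bounded function w_t with |w_t| a nonzero constant on A_t such that e^{i⟨t,ξ(y)⟩} w_t(y) = λ_t w_t(x) Q(x,dy)-a.s. for all x ∈ A_t; and (b) conversely, any t for which such (λ, A, w) exist satisfies r(Q(t)) ≥ 1. Then G is a subgroup of (ℝ^d, +): it contains 0, and if g₁, g₂ ∈ G then g₁ − g₂ ∈ G (witnessed by A = A_{g₁} ∩ A_{g₂}, λ = λ_{g₁} λ̄_{g₂}, w = w_{g₁} w̄_{g₂}). -/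
open MeasureTheory ProbabilityTheory
open scoped InnerProductSpace ENNReal

/-- The witness predicate: there exist `λ` with `|λ| = 1`, a `π`-full `Q`-absorbing set
`A`, and a bounded measurable `w` with `|w|` a nonzero constant on `A`, such that
`e^{i⟨t,ξ(y)⟩} w(y) = λ w(x)` for `Q(x,dy)`-a.e. `y`, for all `x ∈ A`. -/
def ArithWitness {E : Type*} [MeasurableSpace E] {d : ℕ} (Q : Kernel E E)
    (π : Measure E) (ξ : E → EuclideanSpace ℝ (Fin d))
    (t : EuclideanSpace ℝ (Fin d)) : Prop :=
  ∃ (lam : ℂ) (A : Set E) (w : E → ℂ),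
    ‖lam‖ = 1 ∧ MeasurableSet A ∧ π A = 1 ∧ (∀ a ∈ A, Q a A = 1) ∧
    Measurable w ∧ (∃ M : ℝ, ∀ x, ‖w x‖ ≤ M) ∧
    (∃ c : ℝ, 0 < c ∧ ∀ x ∈ A, ‖w x‖ = c) ∧
    ∀ x ∈ A, ∀ᵐ y ∂(Q x),
      Complex.exp (Complex.I * (⟪t, ξ y⟫_ℝ : ℂ)) * w y = lam * w x

lemma inter_full {E : Type*} [MeasurableSpace E] (μ : Measure E) [IsProbabilityMeasure μ]
    {A B : Set E} (hA : MeasurableSet A) (hB : MeasurableSet B)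
    (h1 : μ A = 1) (h2 : μ B = 1) : μ (A ∩ B) = 1 := by
  rw [← prob_compl_eq_zero_iff (hA.inter hB), Set.compl_inter]
  refine measure_union_null ?_ ?_
  · rw [prob_compl_eq_zero_iff hA]; exact h1
  · rw [prob_compl_eq_zero_iff hB]; exact h2

/-- If `r(Q(t)) ≤ 1` for all `t`, every `t` with `r(Q(t)) = 1` admits an arithmetic
witness, and conversely any `t` admitting a witness satisfies `r(Q(t)) ≥ 1`, then
`G = {t : r(Q(t)) = 1}` is a subgroup of `(ℝ^d,+)`: it contains `0` and is closed
under differences. -/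
theorem stmt17 {E : Type*} [MeasurableSpace E] {d : ℕ}
    (Q : Kernel E E) [IsMarkovKernel Q]
    (π : Measure E) [IsProbabilityMeasure π]
    (hinv : π.bind (fun x => Q x) = π)
    (ξ : E → EuclideanSpace ℝ (Fin d)) (hξ : Measurable ξ)
    (r : EuclideanSpace ℝ (Fin d) → ℝ≥0∞)
    (hr1 : ∀ t, r t ≤ 1)
    (ha : ∀ t, r t = 1 → ArithWitness Q π ξ t)
    (hb : ∀ t, ArithWitness Q π ξ t → 1 ≤ r t) :
    (0 : EuclideanSpace ℝ (Fin d)) ∈ {t | r t = 1} ∧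
    ∀ g₁ g₂ : EuclideanSpace ℝ (Fin d),
      g₁ ∈ {t | r t = 1} → g₂ ∈ {t | r t = 1} → g₁ - g₂ ∈ {t | r t = 1} := by
  constructor
  · refine le_antisymm (hr1 0) (hb 0 ?_)
    refine ⟨1, Set.univ, fun _ => 1, by simp, MeasurableSet.univ, by simp, by simp,
      measurable_const, ⟨1, by simp⟩, ⟨1, one_pos, by simp⟩, ?_⟩
    intro x _
    filter_upwards with y
    simp [inner_zero_left]
  · intro g₁ g₂ h1 h2
    refine le_antisymm (hr1 _) (hb _ ?_)
    obtain ⟨l₁, A₁, w₁, hl₁, hA₁m, hA₁π, hA₁abs, hw₁m, ⟨M₁, hM₁⟩, ⟨c₁, hc₁, hc₁'⟩, heq₁⟩ :=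
      ha g₁ h1
    obtain ⟨l₂, A₂, w₂, hl₂, hA₂m, hA₂π, hA₂abs, hw₂m, ⟨M₂, hM₂⟩, ⟨c₂, hc₂, hc₂'⟩, heq₂⟩ :=
      ha g₂ h2
    refine ⟨l₁ * (starRingEnd ℂ) l₂, A₁ ∩ A₂, fun x => w₁ x * (starRingEnd ℂ) (w₂ x),
      ?_, hA₁m.inter hA₂m, inter_full π hA₁m hA₂m hA₁π hA₂π, ?_, ?_, ?_, ?_, ?_⟩
    · simp [hl₁, hl₂]
    · rintro a ⟨ha1, ha2⟩
      exact inter_full (Q a) hA₁m hA₂m (hA₁abs a ha1) (hA₂abs a ha2)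
    · exact hw₁m.mul (Complex.continuous_conj.measurable.comp hw₂m)
    · refine ⟨(max M₁ 0) * (max M₂ 0), fun x => ?_⟩
      rw [norm_mul, RCLike.norm_conj]
      exact mul_le_mul ((hM₁ x).trans (le_max_left _ _))
        ((hM₂ x).trans (le_max_left _ _)) (norm_nonneg _) (le_max_right _ _)
    · refine ⟨c₁ * c₂, mul_pos hc₁ hc₂, ?_⟩
      rintro x ⟨hx1, hx2⟩
      rw [norm_mul, RCLike.norm_conj, hc₁' x hx1, hc₂' x hx2]
    · rintro x ⟨hx1, hx2⟩
      filter_upwards [heq₁ x hx1, heq₂ x hx2] with y e1 e2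
      have e2' := congrArg (starRingEnd ℂ) e2
      simp only [map_mul] at e2'
      have hconj : (starRingEnd ℂ) (Complex.I * (⟪g₂, ξ y⟫_ℝ : ℂ)) =
          -(Complex.I * (⟪g₂, ξ y⟫_ℝ : ℂ)) := by
        simp [Complex.conj_I]
      rw [← Complex.exp_conj, hconj] at e2'
      have key : Complex.exp (Complex.I * (⟪g₁ - g₂, ξ y⟫_ℝ : ℂ)) =
          Complex.exp (Complex.I * (⟪g₁, ξ y⟫_ℝ : ℂ)) *
          Complex.exp (-(Complex.I * (⟪g₂, ξ y⟫_ℝ : ℂ))) := by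
        rw [← Complex.exp_add, inner_sub_left]
        push_cast
        ring_nf
      calc Complex.exp (Complex.I * (⟪g₁ - g₂, ξ y⟫_ℝ : ℂ)) * (w₁ y * (starRingEnd ℂ) (w₂ y))
          = (Complex.exp (Complex.I * (⟪g₁, ξ y⟫_ℝ : ℂ)) * w₁ y) *
            (Complex.exp (-(Complex.I * (⟪g₂, ξ y⟫_ℝ : ℂ))) * (starRingEnd ℂ) (w₂ y)) := by
            rw [key]; ring
        _ = (l₁ * w₁ x) * ((starRingEnd ℂ) l₂ * (starRingEnd ℂ) (w₂ x)) := by rw [e1, e2']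
        _ = l₁ * (starRingEnd ℂ) l₂ * (w₁ x * (starRingEnd ℂ) (w₂ x)) := by ring
end

section
/- Suppose λ : 𝒪 → ℂ (𝒪 a neighbourhood of 0 in ℝ) is three times continuously differentiable with λ(0) = 1, λ'(0) = 0, λ''(0) = −σ², λ'''(0) = −i m₃, and suppose for each n ≥ 1, E_π[e^{itSₙ}] = λ(t)ⁿ π(Π(t)1_E) + π(N(t)ⁿ1_E), where t ↦ π(Π(t)1_E) is C³ near 0 with value 1 and vanishing first derivative at 0, and t ↦ π(N(t)ⁿ1_E) is C³ near 0 with value 0 at t=0 and with all derivatives up to order 3 bounded uniformly in n by Cκ̃ⁿ for some κ̃ < 1. If additionally E_π[|Sₙ|³] < ∞ for every n, then |σ² − E_π[Sₙ²]/n| = O(1/n) and |m₃ − E_π[Sₙ³]/n| = O(1/n); in particular limₙ E_π[Sₙ²]/n = −λ''(0) and limₙ E_π[Sₙ³]/n = i λ'''(0). -/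
open MeasureTheory Filter

private lemma cpow_hasDerivAt {f : ℝ → ℂ} {f' : ℂ} {x : ℝ} (n : ℕ) (hf : HasDerivAt f f' x) :
    HasDerivAt (fun y => f y ^ n) ((n : ℂ) * f x ^ (n - 1) * f') x := by
  induction n with
  | zero => simpa using hasDerivAt_const x (1 : ℂ)
  | succ m ih =>
    have h2 : HasDerivAt (fun y => f y ^ m * f y) _ x := ih.mul hf
    have hfun : (fun y => f y ^ m * f y) = fun y => f y ^ (m + 1) := by
      funext y; rw [pow_succ]
    rw [hfun] at h2
    convert h2 using 1
    cases m with
    | zero => simp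
    | succ k =>
      have hk : k + 1 - 1 = k := rfl
      have hk2 : k + 1 + 1 - 1 = k + 1 := rfl
      rw [hk, hk2]
      push_cast
      ring

private lemma charStep {Ω : Type*} [MeasurableSpace Ω] (P : Measure Ω) [IsFiniteMeasure P]
    (X : Ω → ℝ) (hX : AEStronglyMeasurable X P) (j k : ℕ) (hk : k = j + 1)
    (hintj : Integrable (fun ω => |X ω| ^ j) P)
    (hintk : Integrable (fun ω => |X ω| ^ k) P) (t : ℝ) :
    HasDerivAt
      (fun s : ℝ => ∫ ω, (Complex.I * X ω) ^ j * Complex.exp ((s : ℂ) * (Complex.I * X ω)) ∂P)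
      (∫ ω, (Complex.I * X ω) ^ k * Complex.exp ((t : ℂ) * (Complex.I * X ω)) ∂P) t := by
  subst hk
  have hXc : AEMeasurable (fun ω => (X ω : ℂ)) P :=
    Complex.measurable_ofReal.comp_aemeasurable hX.aemeasurable
  have hnorm : ∀ (s : ℝ) (m : ℕ) (ω : Ω),
      ‖(Complex.I * X ω) ^ m * Complex.exp ((s : ℂ) * (Complex.I * X ω))‖ = |X ω| ^ m := by
    intro s m ω
    rw [norm_mul, norm_pow, norm_mul, Complex.norm_exp]
    simp [Complex.mul_re]
  have hmeas : ∀ (m : ℕ) (s : ℝ), AEStronglyMeasurable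
      (fun ω => (Complex.I * X ω) ^ m * Complex.exp ((s : ℂ) * (Complex.I * X ω))) P := by
    intro m s
    exact ((((hXc.const_mul Complex.I).pow_const m).mul
      (Complex.measurable_exp.comp_aemeasurable
        (((hXc.const_mul Complex.I)).const_mul (s : ℂ)))).aestronglyMeasurable)
  have hint : ∀ (m : ℕ), Integrable (fun ω => |X ω| ^ m) P → ∀ s : ℝ,
      Integrable (fun ω => (Complex.I * X ω) ^ m * Complex.exp ((s : ℂ) * (Complex.I * X ω))) P := by
    intro m hm s
    exact hm.mono' (hmeas m s) (Eventually.of_forall fun ω => le_of_eq (hnorm s m ω))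
  have main := hasDerivAt_integral_of_dominated_loc_of_deriv_le (μ := P) (x₀ := t)
    (F := fun (s : ℝ) ω => (Complex.I * X ω) ^ j * Complex.exp ((s : ℂ) * (Complex.I * X ω)))
    (F' := fun (s : ℝ) ω => (Complex.I * X ω) ^ (j + 1) * Complex.exp ((s : ℂ) * (Complex.I * X ω)))
    (bound := fun ω => |X ω| ^ (j + 1)) Filter.univ_mem
    (Eventually.of_forall fun s => hmeas j s) (hint j hintj t) (hmeas (j + 1) t)
    (Eventually.of_forall fun ω => fun s _ => le_of_eq (hnorm s (j + 1) ω)) hintk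
    (Eventually.of_forall fun ω => fun s _ => by
      have h0 : HasDerivAt (fun s : ℝ => (s : ℂ)) 1 s := by
        simpa using (hasDerivAt_id s).ofReal_comp
      have h1 := ((h0.mul_const (Complex.I * X ω)).cexp).const_mul ((Complex.I * X ω) ^ j)
      convert h1 using 1
      · rfl
      simp only [pow_succ]; ring)
  exact main.2

/-- If the characteristic functions decompose as
`E[e^{itSₙ}] = λ(t)ⁿ π(Π(t)1) + π(N(t)ⁿ1)` near `0`, with `λ` C³, `λ(0)=1`, `λ'(0)=0`,
`λ''(0) = −σ²`, `λ'''(0) = −im₃`, `π(Π(·)1)` C³ with value `1` and vanishing derivative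
at `0`, and `π(N(·)ⁿ1)` C³, vanishing at `0`, with derivatives up to order 3 bounded by
`Cκ̃ⁿ` (`κ̃ < 1`), and `E[|Sₙ|³] < ∞`, then `|σ² − E[Sₙ²]/n| = O(1/n)` and
`|m₃ − E[Sₙ³]/n| = O(1/n)`; in particular `E[Sₙ²]/n → −λ''(0)` and `E[Sₙ³]/n → iλ'''(0)`. -/
theorem stmt18 {Ω : Type*} [MeasurableSpace Ω] (P : Measure Ω) [IsProbabilityMeasure P]
    (S : ℕ → Ω → ℝ) (hS3 : ∀ n, MemLp (S n) 3 P)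
    (Lam Pi1 : ℝ → ℂ) (N : ℕ → ℝ → ℂ)
    (U : Set ℝ) (hUopen : IsOpen U) (hU0 : (0 : ℝ) ∈ U)
    (σ2 m3 : ℝ)
    (hLamC3 : ContDiffOn ℝ 3 Lam U)
    (hLam0 : Lam 0 = 1) (hLam1 : deriv Lam 0 = 0)
    (hLam2 : iteratedDeriv 2 Lam 0 = -(σ2 : ℂ))
    (hLam3 : iteratedDeriv 3 Lam 0 = -(Complex.I * (m3 : ℂ)))
    (hPiC3 : ContDiffOn ℝ 3 Pi1 U) (hPi0 : Pi1 0 = 1) (hPi1 : deriv Pi1 0 = 0)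
    (hNC3 : ∀ n, ContDiffOn ℝ 3 (N n) U) (hN0 : ∀ n, N n 0 = 0)
    (hNbdd : ∃ (C κ : ℝ), 0 ≤ κ ∧ κ < 1 ∧ ∀ n : ℕ, ∀ t ∈ U, ∀ j : ℕ, j ≤ 3 →
      ‖iteratedDeriv j (N n) t‖ ≤ C * κ ^ n)
    (hdecomp : ∀ n : ℕ, 1 ≤ n → ∀ t ∈ U,
      (∫ ω, Complex.exp (Complex.I * (t : ℂ) * (S n ω : ℂ)) ∂P) =
        Lam t ^ n * Pi1 t + N n t) :
    (∃ C : ℝ, ∀ n : ℕ, 1 ≤ n →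
      |σ2 - (∫ ω, (S n ω) ^ 2 ∂P) / n| ≤ C / n ∧
      |m3 - (∫ ω, (S n ω) ^ 3 ∂P) / n| ≤ C / n) ∧
    Tendsto (fun n : ℕ => (∫ ω, (S n ω) ^ 2 ∂P) / n) atTop (nhds σ2) ∧
    Tendsto (fun n : ℕ => (∫ ω, (S n ω) ^ 3 ∂P) / n) atTop (nhds m3) := by
  obtain ⟨C₀, κ, hκ0, hκ1, hNb⟩ := hNbdd
  set CN : ℝ := max C₀ 0 with hCNdef
  have hCN0 : 0 ≤ CN := le_max_right _ _
  -- bound on iterated derivatives of N n at 0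
  have hNder : ∀ (n j : ℕ), j ≤ 3 → ‖iteratedDeriv j (N n) 0‖ ≤ CN := by
    intro n j hj
    have h1 := hNb n 0 hU0 j hj
    have hκn : κ ^ n ≤ 1 := pow_le_one₀ hκ0 hκ1.le
    have hκn0 : (0:ℝ) ≤ κ ^ n := pow_nonneg hκ0 n
    nlinarith [le_max_left C₀ (0:ℝ), norm_nonneg (iteratedDeriv j (N n) 0)]
  -- iterated derivatives as repeated derivs
  have hiter2 : ∀ f : ℝ → ℂ, iteratedDeriv 2 f = deriv (deriv f) := by
    intro f
    rw [show (2:ℕ) = 1 + 1 from rfl, iteratedDeriv_succ, iteratedDeriv_one]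
  have hiter3 : ∀ f : ℝ → ℂ, iteratedDeriv 3 f = deriv (deriv (deriv f)) := by
    intro f
    rw [show (3:ℕ) = 2 + 1 from rfl, iteratedDeriv_succ, hiter2]
  -- differentiability of Lam, Pi1, N up to third derivatives on U
  have hd3 : ∀ g : ℝ → ℂ, ContDiffOn ℝ 3 g U → ∀ t ∈ U,
      HasDerivAt g (deriv g t) t ∧ HasDerivAt (deriv g) (deriv (deriv g) t) t ∧
      HasDerivAt (deriv (deriv g)) (deriv (deriv (deriv g)) t) t := by
    intro g hg t ht
    have hg1 : ContDiffOn ℝ 2 (deriv g) U := hg.deriv_of_isOpen hUopen (by norm_num)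
    have hg2 : ContDiffOn ℝ 1 (deriv (deriv g)) U := hg1.deriv_of_isOpen hUopen (by norm_num)
    have htn : U ∈ nhds t := hUopen.mem_nhds ht
    refine ⟨((hg.differentiableOn (by norm_num)).differentiableAt htn).hasDerivAt,
      ((hg1.differentiableOn (by norm_num)).differentiableAt htn).hasDerivAt,
      ((hg2.differentiableOn (by norm_num)).differentiableAt htn).hasDerivAt⟩
  set Q2 : ℂ := deriv (deriv Pi1) 0 with hQ2def
  set Q3 : ℂ := deriv (deriv (deriv Pi1)) 0 with hQ3def
  set CC : ℝ := ‖Q2‖ + ‖Q3‖ + CN with hCCdef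
  have hCC0 : 0 ≤ CC := by positivity
  -- the key estimate
  have key : ∀ n : ℕ, 1 ≤ n →
      |(n : ℝ) * σ2 - (∫ ω, (S n ω) ^ 2 ∂P)| ≤ CC ∧
      |(n : ℝ) * m3 - (∫ ω, (S n ω) ^ 3 ∂P)| ≤ CC := by
    intro n hn
    set X : Ω → ℝ := S n with hXdef
    -- integrability of moments
    have hint : ∀ j : ℕ, j ≤ 3 → Integrable (fun ω => |X ω| ^ j) P := by
      intro j hj
      rcases Nat.eq_zero_or_pos j with hj0 | hj0
      · subst hj0; simpa using integrable_const (1 : ℝ)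
      have hm : MemLp X j P := (hS3 n).mono_exponent (by exact_mod_cast hj)
      have := hm.integrable_norm_rpow (by exact_mod_cast hj0.ne') (by simp)
      simpa [Real.norm_eq_abs, ← Real.rpow_natCast] using this
    -- the characteristic function and its derivatives
    set φ : ℝ → ℂ := fun s => ∫ ω, Complex.exp ((s : ℂ) * (Complex.I * X ω)) ∂P with hφdef
    set φ1 : ℝ → ℂ := fun s => ∫ ω, (Complex.I * X ω) ^ 1 *
      Complex.exp ((s : ℂ) * (Complex.I * X ω)) ∂P with hφ1def
    set φ2 : ℝ → ℂ := fun s => ∫ ω, (Complex.I * X ω) ^ 2 *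
      Complex.exp ((s : ℂ) * (Complex.I * X ω)) ∂P with hφ2def
    set φ3 : ℝ → ℂ := fun s => ∫ ω, (Complex.I * X ω) ^ 3 *
      Complex.exp ((s : ℂ) * (Complex.I * X ω)) ∂P with hφ3def
    have hXm : AEStronglyMeasurable X P := (hS3 n).aestronglyMeasurable
    have hφeq : φ = fun s : ℝ => ∫ ω, (Complex.I * X ω) ^ 0 *
        Complex.exp ((s : ℂ) * (Complex.I * X ω)) ∂P := by
      simp only [pow_zero, one_mul]; rfl
    have D1 : ∀ t : ℝ, HasDerivAt φ (φ1 t) t := by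
      intro t; rw [hφeq]
      exact charStep P X hXm 0 1 rfl (hint 0 (by norm_num)) (hint 1 (by norm_num)) t
    have D2 : ∀ t : ℝ, HasDerivAt φ1 (φ2 t) t := fun t =>
      charStep P X hXm 1 2 rfl (hint 1 (by norm_num)) (hint 2 (by norm_num)) t
    have D3 : ∀ t : ℝ, HasDerivAt φ2 (φ3 t) t := fun t =>
      charStep P X hXm 2 3 rfl (hint 2 (by norm_num)) (hint 3 (by norm_num)) t
    have hderφ : deriv φ = φ1 := funext fun t => (D1 t).deriv
    have hderφ1 : deriv φ1 = φ2 := funext fun t => (D2 t).deriv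
    have hderφ2 : deriv φ2 = φ3 := funext fun t => (D3 t).deriv
    -- values at 0
    have hI2 : Integrable (fun ω => (X ω) ^ 2) P := by
      have := hint 2 (by norm_num); simpa [sq_abs] using this
    have hφ20 : φ2 0 = -(((∫ ω, (X ω) ^ 2 ∂P : ℝ) : ℂ)) := by
      have hfun : (fun ω => (Complex.I * X ω) ^ 2 *
          Complex.exp (((0:ℝ) : ℂ) * (Complex.I * X ω))) =
          fun ω => -(((X ω ^ 2 : ℝ) : ℂ)) := by
        funext ω
        simp [mul_pow, Complex.I_sq]
      rw [hφ2def]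
      simp only [hfun]
      rw [integral_neg]
      exact congrArg Neg.neg integral_ofReal
    have hφ30 : φ3 0 = -(Complex.I * ((∫ ω, (X ω) ^ 3 ∂P : ℝ) : ℂ)) := by
      have hfun : (fun ω => (Complex.I * X ω) ^ 3 *
          Complex.exp (((0:ℝ) : ℂ) * (Complex.I * X ω))) =
          fun ω => -(Complex.I * ((X ω ^ 3 : ℝ) : ℂ)) := by
        funext ω
        have : Complex.I ^ 3 = -Complex.I := by
          rw [pow_succ, Complex.I_sq]; ring
        simp [mul_pow, this]
      rw [hφ3def]
      simp only [hfun]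
      rw [integral_neg]
      exact congrArg Neg.neg ((integral_const_mul Complex.I _).trans
        (congrArg (fun z => Complex.I * z) integral_ofReal))
    -- the analytic side h
    set h : ℝ → ℂ := fun t => Lam t ^ n * Pi1 t + N n t with hhdef
    have hφh : φ =ᶠ[nhds 0] h := by
      filter_upwards [hUopen.mem_nhds hU0] with t ht
      show φ t = Lam t ^ n * Pi1 t + N n t
      rw [← hdecomp n hn t ht]
      simp only [hφdef]
      congr 1
      funext ω
      congr 1
      rw [hXdef]
      ring
    -- derivatives of h on U
    have dL := fun t ht => hd3 Lam hLamC3 t ht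
    have dQ := fun t ht => hd3 Pi1 hPiC3 t ht
    have dM := fun t ht => hd3 (N n) (hNC3 n) t ht
    set h1 : ℝ → ℂ := fun t => (n : ℂ) * Lam t ^ (n - 1) * deriv Lam t * Pi1 t +
      Lam t ^ n * deriv Pi1 t + deriv (N n) t with hh1def
    have step1 : ∀ t ∈ U, HasDerivAt h (h1 t) t := by
      intro t ht
      exact ((cpow_hasDerivAt n (dL t ht).1).mul (dQ t ht).1).add (dM t ht).1
    set h2 : ℝ → ℂ := fun t => (n : ℂ) * ((n - 1 : ℕ) : ℂ) * Lam t ^ (n - 2) *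
        deriv Lam t ^ 2 * Pi1 t +
      (n : ℂ) * Lam t ^ (n - 1) * deriv (deriv Lam) t * Pi1 t +
      2 * (n : ℂ) * Lam t ^ (n - 1) * deriv Lam t * deriv Pi1 t +
      Lam t ^ n * deriv (deriv Pi1) t + deriv (deriv (N n)) t with hh2def
    have step2 : ∀ t ∈ U, deriv h1 t = h2 t := by
      intro t ht
      have big := ((((HasDerivAt.const_mul ((n : ℂ))
            (cpow_hasDerivAt (n - 1) (dL t ht).1)).mul (dL t ht).2.1).mul
            (dQ t ht).1).add ((cpow_hasDerivAt n (dL t ht).1).mul (dQ t ht).2.1)).add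
            (dM t ht).2.1
      have hfun : (fun t => ((n : ℂ) * Lam t ^ (n - 1)) * deriv Lam t * Pi1 t +
          Lam t ^ n * deriv Pi1 t + deriv (N n) t) = h1 := by
        rw [hh1def]
      simp only [Pi.mul_apply] at big
      replace big : HasDerivAt h1 _ t := big
      rw [big.deriv, hh2def]
      have hnn : n - 1 - 1 = n - 2 := by omega
      rw [hnn]
      ring
    have ed1 : deriv h =ᶠ[nhds 0] h1 := by
      filter_upwards [hUopen.mem_nhds hU0] with t ht
      exact (step1 t ht).deriv
    have ed2 : deriv h1 =ᶠ[nhds 0] h2 := by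
      filter_upwards [hUopen.mem_nhds hU0] with t ht
      exact step2 t ht
    -- second derivative of h at 0
    have hh20 : h2 0 = (n : ℂ) * (deriv (deriv Lam) 0) + Q2 + deriv (deriv (N n)) 0 := by
      rw [hh2def]
      simp [hLam0, hLam1, hPi0, hPi1, hQ2def]
    -- third derivative: deriv h2 0
    have hder2 : deriv h2 0 = (n : ℂ) * (deriv (deriv (deriv Lam)) 0) + Q3 +
        deriv (deriv (deriv (N n))) 0 := by
      have big := (((((((cpow_hasDerivAt (n - 2) (dL 0 hU0).1).const_mul
            ((n : ℂ) * ((n - 1 : ℕ) : ℂ))).mul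
            ((cpow_hasDerivAt 2 (dL 0 hU0).2.1))).mul (dQ 0 hU0).1).add
          ((((cpow_hasDerivAt (n - 1) (dL 0 hU0).1).const_mul ((n : ℂ))).mul
            (dL 0 hU0).2.2).mul (dQ 0 hU0).1)).add
          ((((cpow_hasDerivAt (n - 1) (dL 0 hU0).1).const_mul (2 * (n : ℂ))).mul
            (dL 0 hU0).2.1).mul (dQ 0 hU0).2.1)).add
          ((cpow_hasDerivAt n (dL 0 hU0).1).mul (dQ 0 hU0).2.2)).add
          (dM 0 hU0).2.2
      have hfun : (fun t => ((n : ℂ) * ((n - 1 : ℕ) : ℂ) * Lam t ^ (n - 2)) *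
          (deriv Lam t ^ 2) * Pi1 t +
          ((n : ℂ) * Lam t ^ (n - 1)) * deriv (deriv Lam) t * Pi1 t +
          (2 * (n : ℂ) * Lam t ^ (n - 1)) * deriv Lam t * deriv Pi1 t +
          Lam t ^ n * deriv (deriv Pi1) t + deriv (deriv (N n)) t) = h2 := by
        rw [hh2def]
      simp only [Pi.mul_apply] at big
      replace big : HasDerivAt h2 _ 0 := big
      rw [big.deriv]
      simp [hLam0, hLam1, hPi0, hPi1, hQ3def]
    -- combine: second and third derivative identities
    have h21 : φ1 =ᶠ[nhds 0] deriv h := by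
      have := hφh.deriv; rwa [hderφ] at this
    have h22 : φ2 =ᶠ[nhds 0] h2 := by
      have := h21.deriv
      rw [hderφ1] at this
      exact this.trans (ed1.deriv.trans ed2)
    have e2 : φ2 0 = h2 0 := h22.eq_of_nhds
    have e3 : φ3 0 = deriv h2 0 := by
      have := h22.deriv
      rw [hderφ2] at this
      exact this.eq_of_nhds
    -- extract the two identities
    have eqn2 : -(((∫ ω, (X ω) ^ 2 ∂P : ℝ) : ℂ)) =
        (n : ℂ) * (-(σ2 : ℂ)) + Q2 + deriv (deriv (N n)) 0 := by
      rw [← hφ20, e2, hh20]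
      have : deriv (deriv Lam) 0 = -(σ2 : ℂ) := by rw [← hiter2 Lam]; exact hLam2
      rw [this]
    have eqn3 : -(Complex.I * ((∫ ω, (X ω) ^ 3 ∂P : ℝ) : ℂ)) =
        (n : ℂ) * (-(Complex.I * (m3 : ℂ))) + Q3 + deriv (deriv (deriv (N n))) 0 := by
      rw [← hφ30, e3, hder2]
      have : deriv (deriv (deriv Lam)) 0 = -(Complex.I * (m3 : ℂ)) := by
        rw [← hiter3 Lam]; exact hLam3
      rw [this]
    -- bounds
    have hM2 : ‖deriv (deriv (N n)) 0‖ ≤ CN := by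
      have := hNder n 2 (by norm_num); rwa [hiter2 (N n)] at this
    have hM3 : ‖deriv (deriv (deriv (N n))) 0‖ ≤ CN := by
      have := hNder n 3 (by norm_num); rwa [hiter3 (N n)] at this
    constructor
    · have hc : (Complex.ofReal ((n : ℝ) * σ2 - ∫ ω, (X ω) ^ 2 ∂P)) =
          Q2 + deriv (deriv (N n)) 0 := by
        push_cast
        linear_combination eqn2
      have := congrArg norm hc
      rw [Complex.norm_real, Real.norm_eq_abs] at this
      rw [this]
      calc ‖Q2 + deriv (deriv (N n)) 0‖ ≤ ‖Q2‖ + ‖deriv (deriv (N n)) 0‖ := by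
            exact norm_add_le _ _
        _ ≤ CC := by rw [hCCdef]; have := norm_nonneg Q3; linarith
    · have hc : (Complex.ofReal ((n : ℝ) * m3 - ∫ ω, (X ω) ^ 3 ∂P)) =
          -Complex.I * (Q3 + deriv (deriv (deriv (N n))) 0) := by
        push_cast
        linear_combination (-Complex.I) * eqn3 +
          ((n : ℂ) * (m3 : ℂ) - ((∫ ω, (X ω) ^ 3 ∂P : ℝ) : ℂ)) * Complex.I_sq
      have := congrArg norm hc
      rw [Complex.norm_real, Real.norm_eq_abs] at this
      rw [this]
      rw [norm_mul]
      simp only [norm_neg, Complex.norm_I, one_mul]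
      calc ‖Q3 + deriv (deriv (deriv (N n))) 0‖ ≤
            ‖Q3‖ + ‖deriv (deriv (deriv (N n))) 0‖ := by
            exact norm_add_le _ _
        _ ≤ CC := by rw [hCCdef]; have := norm_nonneg Q2; linarith
  -- conclude
  have main : ∀ n : ℕ, 1 ≤ n →
      |σ2 - (∫ ω, (S n ω) ^ 2 ∂P) / n| ≤ CC / n ∧
      |m3 - (∫ ω, (S n ω) ^ 3 ∂P) / n| ≤ CC / n := by
    intro n hn
    obtain ⟨k2, k3⟩ := key n hn
    have hn0 : (0:ℝ) < n := by exact_mod_cast hn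
    constructor
    · have : σ2 - (∫ ω, (S n ω) ^ 2 ∂P) / n = ((n:ℝ) * σ2 - ∫ ω, (S n ω) ^ 2 ∂P) / n := by
        field_simp
      rw [this, abs_div, abs_of_pos hn0]
      exact div_le_div_of_nonneg_right k2 hn0.le
    · have : m3 - (∫ ω, (S n ω) ^ 3 ∂P) / n = ((n:ℝ) * m3 - ∫ ω, (S n ω) ^ 3 ∂P) / n := by
        field_simp
      rw [this, abs_div, abs_of_pos hn0]
      exact div_le_div_of_nonneg_right k3 hn0.le
  refine ⟨⟨CC, main⟩, ?_, ?_⟩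
  · rw [tendsto_iff_dist_tendsto_zero]
    apply squeeze_zero' (Eventually.of_forall fun n => dist_nonneg)
      (g := fun n : ℕ => CC / n) ?_ (tendsto_const_div_atTop_nhds_zero_nat CC)
    filter_upwards [eventually_ge_atTop 1] with n hn
    rw [Real.dist_eq, abs_sub_comm]
    exact (main n hn).1
  · rw [tendsto_iff_dist_tendsto_zero]
    apply squeeze_zero' (Eventually.of_forall fun n => dist_nonneg)
      (g := fun n : ℕ => CC / n) ?_ (tendsto_const_div_atTop_nhds_zero_nat CC)
    filter_upwards [eventually_ge_atTop 1] with n hn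
    rw [Real.dist_eq, abs_sub_comm]
    exact (main n hn).2
end
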